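/- arXiv:1106.1954 — 6 statements merged into one kernel-verified Lean document; each statement's English description precedes it below -/
import Mathlib

section
/- Suppose the base transformation θ is ergodic and that for ℙ-almost every ω the measure m∘T_ω⁻¹ has a bounded density with respect to m. Let A be a random set such that for each n the function ω ↦ m(A^{(n)}(ω)) is measurable. Then the escape rate E(A,ω) is ℙ-almost everywhere equal to a constant. -/
open MeasureTheory Filter

/-- The map cocycle: `mapIter θ T n ω = T_{θ^{n-1}ω} ∘ ⋯ ∘ T_ω`. -/
def mapIter {Ω X : Type*} (θ : Ω → Ω) (T : Ω → X → X) : ℕ → Ω → X → X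
  | 0, _, x => x
  | n + 1, ω, x => mapIter θ T n (θ ω) (T ω x)

/-- The random set `A^{(n)}(ω) = ⋂_{i=0}^{n-1} (T_ω^{(i)})⁻¹ A(θ^i ω)`. -/
def setIter {Ω X : Type*} (θ : Ω → Ω) (T : Ω → X → X) (A : Ω → Set X) (n : ℕ) (ω : Ω) :
    Set X :=
  ⋂ i ∈ Finset.range n, mapIter θ T i ω ⁻¹' A (θ^[i] ω)

section EscapeAux

variable {Ω X : Type*}

lemma measurable_mapIter [MeasurableSpace X] (θ : Ω → Ω) (T : Ω → X → X)
    (hT : ∀ ω, Measurable (T ω)) : ∀ (n : ℕ) (ω : Ω), Measurable (mapIter θ T n ω)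
  | 0, _ => measurable_id
  | (n+1), ω => (measurable_mapIter θ T hT n (θ ω)).comp (hT ω)

lemma measurableSet_setIter [MeasurableSpace X] (θ : Ω → Ω) (T : Ω → X → X)
    (hT : ∀ ω, Measurable (T ω)) (A : Ω → Set X) (hA : ∀ ω, MeasurableSet (A ω))
    (n : ℕ) (ω : Ω) : MeasurableSet (setIter θ T A n ω) :=
  MeasurableSet.biInter (Finset.range n).countable_toSet
    fun i _ => (measurable_mapIter θ T hT i ω) (hA _)

lemma setIter_succ (θ : Ω → Ω) (T : Ω → X → X) (A : Ω → Set X) (n : ℕ) (ω : Ω) :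
    setIter θ T A (n+1) ω = A ω ∩ T ω ⁻¹' setIter θ T A n (θ ω) := by
  ext x
  simp only [setIter, Set.mem_iInter, Finset.mem_range, Set.mem_inter_iff, Set.mem_preimage]
  constructor
  · intro h
    refine ⟨by simpa [mapIter] using h 0 (Nat.succ_pos n), fun i hi => ?_⟩
    have := h (i+1) (by omega)
    simpa [mapIter, Function.iterate_succ_apply] using this
  · rintro ⟨h0, h⟩ i hi
    cases i with
    | zero => simpa [mapIter] using h0
    | succ j =>
      have := h j (by omega)
      simpa [mapIter, Function.iterate_succ_apply] using this

lemma setIter_anti (θ : Ω → Ω) (T : Ω → X → X) (A : Ω → Set X) {n k : ℕ} (h : n ≤ k) (ω : Ω) :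
    setIter θ T A k ω ⊆ setIter θ T A n ω := by
  intro x hx
  simp only [setIter, Set.mem_iInter, Finset.mem_range] at *
  exact fun i hi => hx i (lt_of_lt_of_le hi h)

lemma ereal_limsup_le_of_control {b c : ℕ → ℝ}
    (h : ∀ d d' : ℝ, d < d' → (∀ᶠ n in atTop, c n ≤ d) → ∀ᶠ n in atTop, b n ≤ d') :
    limsup (fun n => (b n : EReal)) atTop ≤ limsup (fun n => (c n : EReal)) atTop := by
  by_contra hcon
  push_neg at hcon
  obtain ⟨y, hy1, hy2⟩ := EReal.exists_between_coe_real hcon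
  obtain ⟨y', hy'1, hy'2⟩ := EReal.exists_between_coe_real hy1
  have hev : ∀ᶠ n in atTop, c n ≤ y' := by
    filter_upwards [Filter.eventually_lt_of_limsup_lt hy'1] with n hn
    exact_mod_cast hn.le
  have : limsup (fun n => (b n : EReal)) atTop ≤ (y : EReal) := by
    apply Filter.limsup_le_of_le
    · isBoundedDefault
    · filter_upwards [h y' y (by exact_mod_cast hy'2) hev] with n hn
      exact_mod_cast hn
  exact absurd (lt_of_lt_of_le hy2 this) (lt_irrefl _)

lemma real_limsup_eq_toReal {b : ℕ → ℝ} {L : ℝ} (hb : ∀ n, b n ≤ L) :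
    limsup b atTop = (limsup (fun n => (b n : EReal)) atTop).toReal := by
  set r := limsup (fun n => (b n : EReal)) atTop with hrdef
  have hrL : r ≤ (L : EReal) := by
    apply Filter.limsup_le_of_le
    · isBoundedDefault
    · exact Filter.Eventually.of_forall fun n => EReal.coe_le_coe_iff.2 (hb n)
  have hrtop : r ≠ ⊤ := fun h => by simp [h] at hrL
  by_cases hbot : r = ⊥
  · rw [hbot, EReal.toReal_bot, Filter.limsup_eq]
    apply Real.sInf_of_not_bddBelow
    rintro ⟨lb, hlb⟩
    have hmem : (lb - 1) ∈ {a : ℝ | ∀ᶠ n in atTop, b n ≤ a} := by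
      have : r < ((lb - 1 : ℝ) : EReal) := by
        rw [hbot]; exact EReal.bot_lt_coe _
      filter_upwards [Filter.eventually_lt_of_limsup_lt this] with n hn
      exact_mod_cast hn.le
    have := hlb hmem
    linarith
  · set t := r.toReal with htdef
    have hrt : (t : EReal) = r := EReal.coe_toReal hrtop hbot
    change limsup b atTop = r.toReal
    rw [← hrt, EReal.toReal_coe]
    have hcob : IsCoboundedUnder (· ≤ ·) atTop b := by
      apply Filter.IsCoboundedUnder.of_frequently_ge (a := t - 1)
      have : ((t - 1 : ℝ) : EReal) < r := by
        rw [← hrt]; exact_mod_cast sub_one_lt t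
      have := Filter.frequently_lt_of_lt_limsup (by isBoundedDefault) this
      exact this.mono fun n hn => by exact_mod_cast hn.le
    have hbdd : IsBoundedUnder (· ≤ ·) atTop b :=
      ⟨L, Filter.eventually_map.2 (Filter.Eventually.of_forall hb)⟩
    apply le_antisymm
    · apply le_of_forall_pos_le_add
      intro ε hε
      have : r < ((t + ε : ℝ) : EReal) := by
        rw [← hrt]; exact_mod_cast lt_add_of_pos_right t hε
      have hev : ∀ᶠ n in atTop, b n ≤ t + ε := by
        filter_upwards [Filter.eventually_lt_of_limsup_lt this] with n hn
        exact_mod_cast hn.le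
      exact Filter.limsup_le_of_le hcob hev
    · have key : ∀ ε : ℝ, 0 < ε → t - ε ≤ limsup b atTop := by
        intro ε hε
        have : ((t - ε : ℝ) : EReal) < r := by
          rw [← hrt]; exact_mod_cast sub_lt_self t hε
        have hfreq := Filter.frequently_lt_of_lt_limsup (by isBoundedDefault) this
        apply Filter.le_limsup_of_frequently_le _ hbdd
        exact hfreq.mono fun n hn => by exact_mod_cast hn.le
      by_contra hlt
      push_neg at hlt
      have := key ((t - limsup b atTop) / 2) (by linarith)
      linarith

end EscapeAux

/-- If the base transformation `θ` is ergodic and for ℙ-a.e. `ω` the measure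
`m ∘ T_ω⁻¹` has a bounded density with respect to `m`, then for any random set `A` (with
`ω ↦ m(A^{(n)}(ω))` measurable for each `n`) the escape rate
`E(A,ω) = -limsup (1/n) log m(A^{(n)}(ω))` is ℙ-a.e. equal to a constant. -/
theorem escape_rate_ae_constant
    {Ω X : Type*} [MeasurableSpace Ω] [MeasurableSpace X]
    (ℙ : Measure Ω) [IsProbabilityMeasure ℙ]
    (m : Measure X) [IsFiniteMeasure m]
    (θ : Ω → Ω) (hθerg : Ergodic θ ℙ) (hθinv : Function.Bijective θ)
    (T : Ω → X → X) (hT : ∀ ω, Measurable (T ω))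
    (hns : ∀ ω, m.map (T ω) ≪ m)
    (hbd : ∀ᵐ ω ∂ℙ, ∃ K : NNReal,
      ∀ B : Set X, MeasurableSet B → m (T ω ⁻¹' B) ≤ (K : ENNReal) * m B)
    (A : Ω → Set X) (hA : ∀ ω, MeasurableSet (A ω))
    (hAmeas : ∀ n : ℕ, Measurable fun ω => m (setIter θ T A n ω)) :
    ∃ c : ℝ, ∀ᵐ ω ∂ℙ,
      -Filter.limsup
          (fun n : ℕ => (n : ℝ)⁻¹ * Real.log (m (setIter θ T A n ω)).toReal) Filter.atTop
        = c := by
  classical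
  set a : Ω → ℕ → ℝ :=
    fun ω n => (n : ℝ)⁻¹ * Real.log (m (setIter θ T A n ω)).toReal with ha
  set g : Ω → ℝ := fun ω => limsup (a ω) atTop with hgdef
  suffices h : ∃ c : ℝ, g =ᵐ[ℙ] fun _ => c by
    obtain ⟨c, hc⟩ := h
    exact ⟨-c, hc.mono fun ω h => congrArg Neg.neg h⟩
  -- measurability of the sequence and of g
  have hameas : ∀ n, Measurable (fun ω => a ω n) := fun n =>
    measurable_const.mul (Real.measurable_log.comp (ENNReal.measurable_toReal.comp (hAmeas n)))
  have hgmeas : Measurable g := Measurable.limsup fun n => hameas n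
  -- uniform upper bound
  set L : ℝ := max (Real.log (m Set.univ).toReal) 0 with hLdef
  have haL : ∀ ω n, a ω n ≤ L := by
    intro ω n
    have hinv0 : (0:ℝ) ≤ (n : ℝ)⁻¹ := by positivity
    have hinv1 : (n : ℝ)⁻¹ ≤ 1 := by
      rcases Nat.eq_zero_or_pos n with h | h
      · simp [h]
      · rw [inv_le_one_iff₀]; right; exact_mod_cast h
    by_cases h0 : (m (setIter θ T A n ω)).toReal = 0
    · simp only [ha, h0, Real.log_zero, mul_zero]
      exact le_max_right _ _
    · have hpos : 0 < (m (setIter θ T A n ω)).toReal :=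
        lt_of_le_of_ne ENNReal.toReal_nonneg (Ne.symm h0)
      have hlog : Real.log (m (setIter θ T A n ω)).toReal ≤ Real.log (m Set.univ).toReal :=
        Real.log_le_log hpos
          (ENNReal.toReal_mono (measure_ne_top m _) (measure_mono (Set.subset_univ _)))
      rcases le_or_gt (Real.log (m (setIter θ T A n ω)).toReal) 0 with hneg | hposlog
      · have : a ω n ≤ 0 := mul_nonpos_of_nonneg_of_nonpos hinv0 hneg
        exact this.trans (le_max_right _ _)
      · have : a ω n ≤ Real.log (m (setIter θ T A n ω)).toReal :=
          mul_le_of_le_one_left hposlog.le hinv1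
        exact this.trans (hlog.trans (le_max_left _ _))
  -- the bad set where the measure vanishes
  set Z : Set Ω := {ω | ∃ n, m (setIter θ T A n ω) = 0} with hZdef
  have hZmeas : MeasurableSet Z := by
    have : Z = ⋃ n, (fun ω => m (setIter θ T A n ω)) ⁻¹' {0} := by
      ext ω; simp [hZdef]
    rw [this]
    exact MeasurableSet.iUnion fun n => (hAmeas n) (measurableSet_singleton 0)
  -- the key estimate, a.e.
  have hkey : ∀ᵐ ω ∂ℙ, ∃ K : NNReal, 1 ≤ K ∧
      ∀ n, m (setIter θ T A (n+1) ω) ≤ (K : ENNReal) * m (setIter θ T A n (θ ω)) := by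
    filter_upwards [hbd] with ω hω
    obtain ⟨K, hK⟩ := hω
    refine ⟨max K 1, le_max_right _ _, fun n => ?_⟩
    calc m (setIter θ T A (n+1) ω)
        = m (A ω ∩ T ω ⁻¹' setIter θ T A n (θ ω)) := by rw [setIter_succ]
      _ ≤ m (T ω ⁻¹' setIter θ T A n (θ ω)) := measure_mono Set.inter_subset_right
      _ ≤ (K : ENNReal) * m (setIter θ T A n (θ ω)) :=
          hK _ (measurableSet_setIter θ T hT A hA n (θ ω))
      _ ≤ ((max K 1 : NNReal) : ENNReal) * m (setIter θ T A n (θ ω)) :=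
          mul_le_mul_left (ENNReal.coe_le_coe.2 (le_max_left _ _)) _
  -- a.e. invariance of Z
  have hZsub : θ ⁻¹' Z ≤ᵐ[ℙ] Z := by
    filter_upwards [hkey] with ω hω hmem
    obtain ⟨K, _, hK⟩ := hω
    obtain ⟨n, hn⟩ := hmem
    exact ⟨n+1, le_antisymm (le_trans (hK n) (by rw [hn, mul_zero])) zero_le⟩
  -- vanishing on Z
  have hg_zero : ∀ ω, ω ∈ Z → g ω = 0 := by
    intro ω hω
    obtain ⟨N, hN⟩ := hω
    have hev : a ω =ᶠ[atTop] fun _ => (0:ℝ) :=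
      Filter.eventually_atTop.2 ⟨N, fun n hn => by
        have h0 : m (setIter θ T A n ω) = 0 :=
          le_antisymm (le_trans (measure_mono (setIter_anti θ T A hn ω)) (le_of_eq hN))
            zero_le
        simp [ha, h0]⟩
    rw [hgdef]
    simp only []
    rw [Filter.limsup_congr hev, Filter.limsup_const]
  rcases hθerg.ae_empty_or_univ_of_preimage_ae_le hZmeas.nullMeasurableSet hZsub with hZ0 | hZ1
  · -- ℙ Z = 0 : the main case
    rw [ae_eq_empty] at hZ0
    have hZθ0 : ℙ (θ ⁻¹' Z) = 0 := by
      rw [hθerg.toMeasurePreserving.measure_preimage hZmeas.nullMeasurableSet]; exact hZ0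
    have hnmem : ∀ᵐ ω ∂ℙ, ω ∉ Z := measure_eq_zero_iff_ae_notMem.1 hZ0
    have hnmemθ : ∀ᵐ ω ∂ℙ, θ ω ∉ Z := measure_eq_zero_iff_ae_notMem.1 hZθ0
    -- the EReal limsup
    set g' : Ω → EReal := fun ω => limsup (fun n => (a ω n : EReal)) atTop with hg'def
    have hg'meas : Measurable g' :=
      Measurable.limsup fun n => measurable_coe_real_ereal.comp (hameas n)
    -- a.e. monotonicity of g' along θ
    have hle : ∀ᵐ ω ∂ℙ, g' ω ≤ g' (θ ω) := by
      filter_upwards [hkey, hnmem, hnmemθ] with ω hK hωZ hθωZ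
      obtain ⟨K, hK1, hKle⟩ := hK
      have hμpos : ∀ n, m (setIter θ T A n ω) ≠ 0 := by
        intro n hn; exact hωZ ⟨n, hn⟩
      have hνpos : ∀ n, m (setIter θ T A n (θ ω)) ≠ 0 := by
        intro n hn; exact hθωZ ⟨n, hn⟩
      apply ereal_limsup_le_of_control
      intro d d' hdd' hev
      -- pointwise estimate
      have hKR : (1:ℝ) ≤ (K : ℝ) := by exact_mod_cast hK1
      have hab : ∀ n : ℕ, 1 ≤ n →
          a ω (n+1) ≤ ((n:ℝ)+1)⁻¹ * Real.log (K:ℝ) + ((n:ℝ)+1)⁻¹ * ((n:ℝ) * a (θ ω) n) := by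
        intro n hn
        have hμfin : m (setIter θ T A (n+1) ω) ≠ ⊤ := measure_ne_top m _
        have hνfin : m (setIter θ T A n (θ ω)) ≠ ⊤ := measure_ne_top m _
        have h1 : (m (setIter θ T A (n+1) ω)).toReal ≤
            (K:ℝ) * (m (setIter θ T A n (θ ω))).toReal := by
          have := ENNReal.toReal_mono (ENNReal.mul_ne_top ENNReal.coe_ne_top hνfin) (hKle n)
          rwa [ENNReal.toReal_mul, ENNReal.coe_toReal] at this
        have hμp : 0 < (m (setIter θ T A (n+1) ω)).toReal :=
          ENNReal.toReal_pos (hμpos (n+1)) hμfin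
        have hνp : 0 < (m (setIter θ T A n (θ ω))).toReal :=
          ENNReal.toReal_pos (hνpos n) hνfin
        have h2 : Real.log (m (setIter θ T A (n+1) ω)).toReal ≤
            Real.log (K:ℝ) + Real.log (m (setIter θ T A n (θ ω))).toReal := by
          have := Real.log_le_log hμp h1
          rwa [Real.log_mul (by linarith) (ne_of_gt hνp)] at this
        have hnR : (0:ℝ) < (n:ℝ) := by exact_mod_cast hn
        have h3 : (n:ℝ) * a (θ ω) n = Real.log (m (setIter θ T A n (θ ω))).toReal := by
          simp only [ha]
          field_simp
        have hinvpos : (0:ℝ) ≤ ((n:ℝ)+1)⁻¹ := by positivity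
        calc a ω (n+1)
            = ((n:ℝ)+1)⁻¹ * Real.log (m (setIter θ T A (n+1) ω)).toReal := by
              simp only [ha]; push_cast; ring_nf
          _ ≤ ((n:ℝ)+1)⁻¹ *
              (Real.log (K:ℝ) + Real.log (m (setIter θ T A n (θ ω))).toReal) :=
              mul_le_mul_of_nonneg_left h2 hinvpos
          _ = ((n:ℝ)+1)⁻¹ * Real.log (K:ℝ) + ((n:ℝ)+1)⁻¹ * ((n:ℝ) * a (θ ω) n) := by
              rw [h3]; ring
      -- smallness of the error terms
      have hεpos : (0:ℝ) < (d' - d) / 2 := by linarith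
      have htend : ∀ C : ℝ, Tendsto (fun n : ℕ => ((n:ℝ)+1)⁻¹ * C) atTop (nhds 0) := by
        intro C
        have := tendsto_one_div_add_atTop_nhds_zero_nat.mul_const C
        simpa [one_div] using this
      have he1 : ∀ᶠ n : ℕ in atTop, ((n:ℝ)+1)⁻¹ * Real.log (K:ℝ) < (d' - d) / 2 :=
        (htend _).eventually_lt_const hεpos
      have he2 : ∀ᶠ n : ℕ in atTop, ((n:ℝ)+1)⁻¹ * |d| < (d' - d) / 2 :=
        (htend _).eventually_lt_const hεpos
      have hstep : ∀ᶠ n : ℕ in atTop, a ω (n+1) ≤ d' := by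
        filter_upwards [hev, he1, he2, eventually_ge_atTop 1] with n hcn hsm1 hsm2 hn1
        have h0 : a ω (n+1) ≤ ((n:ℝ)+1)⁻¹ * Real.log (K:ℝ) + ((n:ℝ)+1)⁻¹ * ((n:ℝ) * a (θ ω) n) :=
          hab n hn1
        have hd1 : ((n:ℝ)+1)⁻¹ * ((n:ℝ) * a (θ ω) n) ≤ ((n:ℝ)+1)⁻¹ * ((n:ℝ) * d) := by
          apply mul_le_mul_of_nonneg_left _ (by positivity)
          exact mul_le_mul_of_nonneg_left hcn (by positivity)
        have hd2 : ((n:ℝ)+1)⁻¹ * ((n:ℝ) * d) = d - d * ((n:ℝ)+1)⁻¹ := by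
          have : ((n:ℝ)+1) ≠ 0 := by positivity
          field_simp
          ring
        have hd3 : -(d * ((n:ℝ)+1)⁻¹) ≤ ((n:ℝ)+1)⁻¹ * |d| := by
          have h := neg_le_abs (d * ((n:ℝ)+1)⁻¹)
          rw [abs_mul, abs_of_nonneg (by positivity : (0:ℝ) ≤ ((n:ℝ)+1)⁻¹),
            mul_comm |d| (((n:ℝ)+1)⁻¹)] at h
          exact h
        linarith
      obtain ⟨N, hN⟩ := Filter.eventually_atTop.1 hstep
      rw [Filter.eventually_atTop]
      refine ⟨N+1, fun n hn => ?_⟩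
      obtain ⟨k, rfl⟩ : ∃ k, n = k + 1 := ⟨n - 1, by omega⟩
      exact hN k (by omega)
    -- zero-one law for the level sets of g'
    have hiff : ∀ᵐ ω ∂ℙ, ∀ q : ℚ,
        (g' ω < ((q:ℝ):EReal) ↔ g' (θ ω) < ((q:ℝ):EReal)) := by
      rw [ae_all_iff]
      intro q
      set S : Set Ω := {ω | g' ω < ((q:ℝ):EReal)} with hSdef
      have hSmeas : MeasurableSet S := measurableSet_lt hg'meas measurable_const
      have hSsub : θ ⁻¹' S ≤ᵐ[ℙ] S := by
        filter_upwards [hle] with ω hω hmem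
        exact lt_of_le_of_lt hω hmem
      rcases hθerg.ae_empty_or_univ_of_preimage_ae_le hSmeas.nullMeasurableSet hSsub with h0 | h1
      · rw [ae_eq_empty] at h0
        have h0' : ℙ (θ ⁻¹' S) = 0 := by
          rw [hθerg.toMeasurePreserving.measure_preimage hSmeas.nullMeasurableSet]; exact h0
        filter_upwards [measure_eq_zero_iff_ae_notMem.1 h0, measure_eq_zero_iff_ae_notMem.1 h0'] with ω h1 h2
        exact ⟨fun h => absurd h h1, fun h => absurd h h2⟩
      · rw [ae_eq_univ] at h1
        have h1' : ℙ (θ ⁻¹' Sᶜ) = 0 := by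
          rw [hθerg.toMeasurePreserving.measure_preimage hSmeas.compl.nullMeasurableSet]; exact h1
        filter_upwards [measure_eq_zero_iff_ae_notMem.1 h1, measure_eq_zero_iff_ae_notMem.1 h1'] with ω h1 h2
        have hω : ω ∈ S := by_contra fun h => h1 h
        have hθω : θ ω ∈ S := by_contra fun h => h2 h
        exact ⟨fun _ => hθω, fun _ => hω⟩
    have heq : ∀ᵐ ω ∂ℙ, g' (θ ω) = g' ω := by
      filter_upwards [hiff] with ω hq
      by_contra hne
      rcases lt_or_gt_of_ne hne with hlt | hgt
      · obtain ⟨q, hq1, hq2⟩ := EReal.exists_rat_btwn_of_lt hlt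
        exact absurd ((hq q).2 hq1) (not_lt.2 hq2.le)
      · obtain ⟨q, hq1, hq2⟩ := EReal.exists_rat_btwn_of_lt hgt
        exact absurd ((hq q).1 hq1) (not_lt.2 hq2.le)
    -- conclude: g is a.e. invariant, hence constant
    have hinv : g ∘ θ =ᵐ[ℙ] g := by
      filter_upwards [heq] with ω h
      show g (θ ω) = g ω
      have e1 : g (θ ω) = (g' (θ ω)).toReal := real_limsup_eq_toReal (fun n => haL (θ ω) n)
      have e2 : g ω = (g' ω).toReal := real_limsup_eq_toReal (fun n => haL ω n)
      rw [e1, e2, h]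
    exact hθerg.ae_eq_const_of_ae_eq_comp₀ hgmeas.nullMeasurable hinv
  · -- ℙ Z = 1 : everything is eventually zero
    rw [ae_eq_univ] at hZ1
    have hZθ1 : ℙ (θ ⁻¹' Zᶜ) = 0 := by
      rw [hθerg.toMeasurePreserving.measure_preimage hZmeas.compl.nullMeasurableSet]; exact hZ1
    have hinv : g ∘ θ =ᵐ[ℙ] g := by
      filter_upwards [measure_eq_zero_iff_ae_notMem.1 hZ1, measure_eq_zero_iff_ae_notMem.1 hZθ1]
        with ω h1 h2
      have hω : ω ∈ Z := by_contra fun h => h1 h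
      have hθω : θ ω ∈ Z := by_contra fun h => h2 h
      show g (θ ω) = g ω
      rw [hg_zero _ hθω, hg_zero _ hω]
    exact hθerg.ae_eq_const_of_ae_eq_comp₀ hgmeas.nullMeasurable hinv
end

section
/- (Main Theorem) Fix ω ∈ Ω and suppose there exists f ∈ L^∞(X,m) with λ(ω,f) < 0. Let A₊ and A₋ be the random sets with A₊(θⁿω) = {x ∈ X : (𝓛_ω^{(n)} f)(x) > 0} and A₋(θⁿω) = {x ∈ X : (𝓛_ω^{(n)} f)(x) < 0} for n ≥ 0. Then E(A₊,ω) ≤ −λ(ω,f) and E(A₋,ω) ≤ −λ(ω,f); equivalently, limsup_{n→∞}(1/n) log m(A₊^{(n)}(ω)) ≥ λ(ω,f) and limsup_{n→∞}(1/n) log m(A₋^{(n)}(ω)) ≥ λ(ω,f). -/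
open MeasureTheory Filter
open scoped ENNReal NNReal

set_option linter.unusedSectionVars false

/-- The operator cocycle: `opIter θ L n ω = L_{θ^{n-1}ω} ∘ ⋯ ∘ L_ω`. -/
def opIter {Ω X : Type*} (θ : Ω → Ω) (L : Ω → (X → ℝ) → X → ℝ) :
    ℕ → Ω → (X → ℝ) → X → ℝ
  | 0, _, f => f
  | n + 1, ω, f => opIter θ L n (θ ω) (L ω f)

/-- `A₊^{(n)}(ω)` for the random set `A₊(θ^i ω) = {x : 𝓛_ω^{(i)} f x > 0}`. -/
def plusSetIter {Ω X : Type*} (θ : Ω → Ω) (T : Ω → X → X)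
    (L : Ω → (X → ℝ) → X → ℝ) (f : X → ℝ) (n : ℕ) (ω : Ω) : Set X :=
  ⋂ i ∈ Finset.range n, mapIter θ T i ω ⁻¹' {x | 0 < opIter θ L i ω f x}

/-- `A₋^{(n)}(ω)` for the random set `A₋(θ^i ω) = {x : 𝓛_ω^{(i)} f x < 0}`. -/
def minusSetIter {Ω X : Type*} (θ : Ω → Ω) (T : Ω → X → X)
    (L : Ω → (X → ℝ) → X → ℝ) (f : X → ℝ) (n : ℕ) (ω : Ω) : Set X :=
  ⋂ i ∈ Finset.range n, mapIter θ T i ω ⁻¹' {x | opIter θ L i ω f x < 0}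

section Aux

variable {Ω X : Type*} [MeasurableSpace X] {m : Measure X} [IsFiniteMeasure m]
  {θ : Ω → Ω} {T : Ω → X → X} {L : Ω → (X → ℝ) → X → ℝ}

lemma opIter_integrable (hLint : ∀ ω' g, Integrable g m → Integrable (L ω' g) m) :
    ∀ (n : ℕ) (ω : Ω) (g : X → ℝ), Integrable g m → Integrable (opIter θ L n ω g) m
  | 0, _, _, hg => hg
  | n + 1, ω, g, hg => opIter_integrable hLint n (θ ω) (L ω g) (hLint ω g hg)

lemma opIter_integral
    (hLint : ∀ ω' g, Integrable g m → Integrable (L ω' g) m)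
    (hL : ∀ ω' (g : X → ℝ), Integrable g m → ∀ B : Set X, MeasurableSet B →
      ∫ x in B, L ω' g x ∂m = ∫ x in T ω' ⁻¹' B, g x ∂m) :
    ∀ (n : ℕ) (ω : Ω) (g : X → ℝ), Integrable g m →
      ∫ x, opIter θ L n ω g x ∂m = ∫ x, g x ∂m
  | 0, _, _, _ => rfl
  | n + 1, ω, g, hg => by
      have h1 := opIter_integral hLint hL n (θ ω) (L ω g) (hLint ω g hg)
      have h2 := hL ω g hg Set.univ MeasurableSet.univ
      simp only [Set.preimage_univ, Measure.restrict_univ] at h2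
      exact h1.trans h2

lemma plusSetIter_zero (f : X → ℝ) (ω : Ω) : plusSetIter θ T L f 0 ω = Set.univ := by
  simp [plusSetIter]

lemma minusSetIter_zero (f : X → ℝ) (ω : Ω) : minusSetIter θ T L f 0 ω = Set.univ := by
  simp [minusSetIter]

lemma plusSetIter_succ (f : X → ℝ) (n : ℕ) (ω : Ω) :
    plusSetIter θ T L f (n + 1) ω
      = {x | 0 < f x} ∩ T ω ⁻¹' plusSetIter θ T L (L ω f) n (θ ω) := by
  ext x
  simp only [plusSetIter, Set.mem_iInter, Finset.mem_range, Set.mem_inter_iff,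
    Set.mem_preimage, Set.mem_setOf_eq]
  constructor
  · intro h
    exact ⟨h 0 (Nat.succ_pos _), fun i hi => h (i + 1) (Nat.succ_lt_succ hi)⟩
  · rintro ⟨h0, h⟩ i hi
    cases i with
    | zero => exact h0
    | succ j => exact h j (Nat.lt_of_succ_lt_succ hi)

lemma minusSetIter_succ (f : X → ℝ) (n : ℕ) (ω : Ω) :
    minusSetIter θ T L f (n + 1) ω
      = {x | f x < 0} ∩ T ω ⁻¹' minusSetIter θ T L (L ω f) n (θ ω) := by
  ext x
  simp only [minusSetIter, Set.mem_iInter, Finset.mem_range, Set.mem_inter_iff,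
    Set.mem_preimage, Set.mem_setOf_eq]
  constructor
  · intro h
    exact ⟨h 0 (Nat.succ_pos _), fun i hi => h (i + 1) (Nat.succ_lt_succ hi)⟩
  · rintro ⟨h0, h⟩ i hi
    cases i with
    | zero => exact h0
    | succ j => exact h j (Nat.lt_of_succ_lt_succ hi)

lemma cutPos (A : Set X) (hA : MeasurableSet A) {g : X → ℝ} (hg : Integrable g m) :
    ∃ S : Set X, MeasurableSet S ∧ S ⊆ A ∩ {x | 0 < g x} ∧
      ∫ x in A, max (g x) 0 ∂m = ∫ x in S, g x ∂m := by
  obtain ⟨g', hg'meas, hgg'⟩ := hg.1.aemeasurable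
  set N := toMeasurable m {x | g x ≠ g' x} with hNdef
  have hNnull : m N = 0 := by
    rw [hNdef, measure_toMeasurable]
    exact ae_iff.mp hgg'
  have hsubN : {x | g x ≠ g' x} ⊆ N := subset_toMeasurable m _
  set s := {x | 0 < g' x} with hsdef
  have hsmeas : MeasurableSet s := measurableSet_lt measurable_const hg'meas
  refine ⟨(A ∩ s) \ N, ((hA.inter hsmeas).diff (measurableSet_toMeasurable m _)), ?_, ?_⟩
  · rintro x ⟨⟨hxA, hxs⟩, hxN⟩
    have hgx : g x = g' x := by
      by_contra hne
      exact hxN (hsubN hne)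
    exact ⟨hxA, show 0 < g x from hgx ▸ hxs⟩
  · have hmaxint : Integrable (fun x => max (g x) 0) m := hg.pos_part
    have e1 : ∫ x in A ∩ s, max (g x) 0 ∂m + ∫ x in A \ s, max (g x) 0 ∂m
        = ∫ x in A, max (g x) 0 ∂m :=
      integral_inter_add_diff hsmeas hmaxint.integrableOn
    have e2 : ∫ x in A \ s, max (g x) 0 ∂m = 0 := by
      rw [setIntegral_congr_ae (hA.diff hsmeas)
        (hgg'.mono fun x hx hmem => show max (g x) 0 = (0:ℝ) by
          rw [hx]; exact max_eq_right (not_lt.mp hmem.2))]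
      exact integral_zero _ _
    have e3 : ∫ x in A ∩ s, max (g x) 0 ∂m = ∫ x in A ∩ s, g x ∂m := by
      refine setIntegral_congr_ae (hA.inter hsmeas) (hgg'.mono fun x hx hmem => ?_)
      rw [hx]
      exact max_eq_left (le_of_lt hmem.2)
    have e4 : ∫ x in A ∩ s, g x ∂m = ∫ x in (A ∩ s) \ N, g x ∂m := by
      have hae : (A ∩ s : Set X) =ᵐ[m] ((A ∩ s) \ N : Set X) := by
        rw [ae_eq_set]
        constructor
        · refine measure_mono_null (fun x hx => ?_) hNnull
          by_contra hN
          exact hx.2 ⟨hx.1, hN⟩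
        · exact measure_mono_null (fun x hx => (hx.2 hx.1.1).elim) hNnull
      rw [Measure.restrict_congr_set hae]
    rw [← e1, e2, add_zero, e3, e4]

lemma cutNeg (A : Set X) (hA : MeasurableSet A) {g : X → ℝ} (hg : Integrable g m) :
    ∃ S : Set X, MeasurableSet S ∧ S ⊆ A ∩ {x | g x < 0} ∧
      ∫ x in A, min (g x) 0 ∂m = ∫ x in S, g x ∂m := by
  obtain ⟨S, h1, h2, h3⟩ := cutPos A hA (g := fun x => -g x) hg.neg
  refine ⟨S, h1, fun x hx => ⟨(h2 hx).1, ?_⟩, ?_⟩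
  · have := (h2 hx).2
    simpa using this
  · have hpt : ∀ a : ℝ, min a 0 = -max (-a) 0 := fun a => by
      have h := max_neg_neg a 0
      rw [neg_zero] at h
      rw [h, neg_neg]
    calc ∫ x in A, min (g x) 0 ∂m
        = ∫ x in A, -max (-g x) 0 ∂m :=
          integral_congr_ae (Eventually.of_forall fun x => hpt (g x))
      _ = -∫ x in A, max (-g x) 0 ∂m := integral_neg _
      _ = -∫ x in S, -g x ∂m := by rw [h3]
      _ = ∫ x in S, g x ∂m := by rw [integral_neg, neg_neg]


lemma keyPlus (hT : ∀ ω', Measurable (T ω'))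
    (hLint : ∀ ω' g, Integrable g m → Integrable (L ω' g) m)
    (hL : ∀ ω' (g : X → ℝ), Integrable g m → ∀ B : Set X, MeasurableSet B →
      ∫ x in B, L ω' g x ∂m = ∫ x in T ω' ⁻¹' B, g x ∂m) :
    ∀ (n : ℕ) (ω : Ω) (g : X → ℝ), Integrable g m →
      ∃ S : Set X, MeasurableSet S ∧ S ⊆ plusSetIter θ T L g (n + 1) ω ∧
        ∫ x, max (opIter θ L n ω g x) 0 ∂m ≤ ∫ x in S, g x ∂m := by
  intro n
  induction n with
  | zero =>
    intro ω g hg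
    obtain ⟨S, h1, h2, h3⟩ := cutPos Set.univ MeasurableSet.univ hg
    refine ⟨S, h1, ?_, ?_⟩
    · rw [plusSetIter_succ, plusSetIter_zero]
      intro x hx
      exact ⟨(h2 hx).2, Set.mem_preimage.mpr (Set.mem_univ _)⟩
    · have : ∫ x, max (g x) 0 ∂m = ∫ x in Set.univ, max (g x) 0 ∂m := by
        rw [Measure.restrict_univ]
      rw [show (∫ x, max (opIter θ L 0 ω g x) 0 ∂m) = ∫ x, max (g x) 0 ∂m from rfl,
        this, h3]
  | succ n ih =>
    intro ω g hg
    obtain ⟨S₁, hS₁meas, hS₁sub, hS₁le⟩ := ih (θ ω) (L ω g) (hLint ω g hg)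
    have hA : MeasurableSet (T ω ⁻¹' S₁) := hS₁meas.preimage (hT ω)
    obtain ⟨S, hSmeas, hSsub, hSeq⟩ := cutPos (T ω ⁻¹' S₁) hA hg
    refine ⟨S, hSmeas, ?_, ?_⟩
    · rw [plusSetIter_succ]
      intro x hx
      have h := hSsub hx
      exact ⟨h.2, Set.mem_preimage.mpr (hS₁sub (Set.mem_preimage.mp h.1))⟩
    · calc ∫ x, max (opIter θ L (n + 1) ω g x) 0 ∂m
          = ∫ x, max (opIter θ L n (θ ω) (L ω g) x) 0 ∂m := rfl
        _ ≤ ∫ x in S₁, L ω g x ∂m := hS₁le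
        _ = ∫ x in T ω ⁻¹' S₁, g x ∂m := hL ω g hg S₁ hS₁meas
        _ ≤ ∫ x in T ω ⁻¹' S₁, max (g x) 0 ∂m :=
            integral_mono_ae hg.integrableOn hg.pos_part.integrableOn
              (Eventually.of_forall fun x => le_max_left _ _)
        _ = ∫ x in S, g x ∂m := hSeq

lemma keyMinus (hT : ∀ ω', Measurable (T ω'))
    (hLint : ∀ ω' g, Integrable g m → Integrable (L ω' g) m)
    (hL : ∀ ω' (g : X → ℝ), Integrable g m → ∀ B : Set X, MeasurableSet B →
      ∫ x in B, L ω' g x ∂m = ∫ x in T ω' ⁻¹' B, g x ∂m) :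
    ∀ (n : ℕ) (ω : Ω) (g : X → ℝ), Integrable g m →
      ∃ S : Set X, MeasurableSet S ∧ S ⊆ minusSetIter θ T L g (n + 1) ω ∧
        ∫ x in S, g x ∂m ≤ ∫ x, min (opIter θ L n ω g x) 0 ∂m := by
  intro n
  have hminint : ∀ g : X → ℝ, Integrable g m → Integrable (fun x => min (g x) 0) m := by
    intro g hg
    have he : (fun x => min (g x) 0) = fun x => g x - max (g x) 0 := by
      funext x
      rcases le_total 0 (g x) with h | h
      · rw [min_eq_right h, max_eq_left h, sub_self]
      · rw [min_eq_left h, max_eq_right h, sub_zero]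
    rw [he]
    exact hg.sub hg.pos_part
  induction n with
  | zero =>
    intro ω g hg
    obtain ⟨S, h1, h2, h3⟩ := cutNeg Set.univ MeasurableSet.univ hg
    refine ⟨S, h1, ?_, ?_⟩
    · rw [minusSetIter_succ, minusSetIter_zero]
      intro x hx
      exact ⟨(h2 hx).2, Set.mem_preimage.mpr (Set.mem_univ _)⟩
    · have huniv : ∫ x, min (g x) 0 ∂m = ∫ x in Set.univ, min (g x) 0 ∂m := by
        rw [Measure.restrict_univ]
      rw [show (∫ x, min (opIter θ L 0 ω g x) 0 ∂m) = ∫ x, min (g x) 0 ∂m from rfl,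
        huniv, h3]
  | succ n ih =>
    intro ω g hg
    obtain ⟨S₁, hS₁meas, hS₁sub, hS₁le⟩ := ih (θ ω) (L ω g) (hLint ω g hg)
    have hA : MeasurableSet (T ω ⁻¹' S₁) := hS₁meas.preimage (hT ω)
    obtain ⟨S, hSmeas, hSsub, hSeq⟩ := cutNeg (T ω ⁻¹' S₁) hA hg
    refine ⟨S, hSmeas, ?_, ?_⟩
    · rw [minusSetIter_succ]
      intro x hx
      have h := hSsub hx
      exact ⟨h.2, Set.mem_preimage.mpr (hS₁sub (Set.mem_preimage.mp h.1))⟩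
    · calc ∫ x in S, g x ∂m
          = ∫ x in T ω ⁻¹' S₁, min (g x) 0 ∂m := hSeq.symm
        _ ≤ ∫ x in T ω ⁻¹' S₁, g x ∂m :=
            integral_mono_ae (hminint g hg).integrableOn hg.integrableOn
              (Eventually.of_forall fun x => min_le_left _ _)
        _ = ∫ x in S₁, L ω g x ∂m := (hL ω g hg S₁ hS₁meas).symm
        _ ≤ ∫ x, min (opIter θ L n (θ ω) (L ω g) x) 0 ∂m := hS₁le
        _ = ∫ x, min (opIter θ L (n + 1) ω g x) 0 ∂m := rfl

lemma seq_bounded (P : ℕ → Set X) (n : ℕ) :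
    (n : ℝ)⁻¹ * Real.log (m (P n)).toReal ≤ |Real.log (m Set.univ).toReal| := by
  rcases Nat.eq_zero_or_pos n with h0 | hpos
  · simp [h0]
  · have hn : (0 : ℝ) < n := by exact_mod_cast hpos
    have hn1 : (1 : ℝ) ≤ n := by exact_mod_cast hpos
    rcases eq_or_lt_of_le (show (0 : ℝ) ≤ (m (P n)).toReal from ENNReal.toReal_nonneg)
      with h | h
    · rw [← h, Real.log_zero, mul_zero]
      exact abs_nonneg _
    · have hle : Real.log (m (P n)).toReal ≤ Real.log (m Set.univ).toReal :=
        Real.log_le_log h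
          (ENNReal.toReal_mono (measure_ne_top m _) (measure_mono (Set.subset_univ _)))
      rcases le_total (Real.log (m (P n)).toReal) 0 with hneg | hpos2
      · have : (n : ℝ)⁻¹ * Real.log (m (P n)).toReal ≤ 0 :=
          mul_nonpos_of_nonneg_of_nonpos (inv_nonneg.mpr hn.le) hneg
        exact this.trans (abs_nonneg _)
      · calc (n : ℝ)⁻¹ * Real.log (m (P n)).toReal
            ≤ 1 * Real.log (m (P n)).toReal := by
              apply mul_le_mul_of_nonneg_right _ hpos2
              exact inv_le_one_of_one_le₀ hn1
          _ = Real.log (m (P n)).toReal := one_mul _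
          _ ≤ Real.log (m Set.univ).toReal := hle
          _ ≤ |Real.log (m Set.univ).toReal| := le_abs_self _

lemma aux_limsup {a b : ℕ → ℝ} (ha : limsup a atTop < 0) (K d : ℝ)
    (hbK : ∀ n, b n ≤ K)
    (hkey : ∀ᶠ n in atTop, a n ≤ d / n + ((n : ℝ) + 1) / n * b (n + 1)) :
    limsup a atTop ≤ limsup b atTop := by
  rw [limsup_eq] at ha ⊢
  have hSb_ne : {c : ℝ | ∀ᶠ n in atTop, b n ≤ c}.Nonempty :=
    ⟨K, Eventually.of_forall hbK⟩
  have hSa_bdd : BddBelow {c : ℝ | ∀ᶠ n in atTop, a n ≤ c} := by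
    by_contra h
    rw [Real.sInf_of_not_bddBelow h] at ha
    exact lt_irrefl _ ha
  refine le_csInf hSb_ne fun c hc => ?_
  rcases le_or_gt 0 c with h0 | h0
  · exact le_of_lt (lt_of_lt_of_le ha h0)
  · refine le_of_forall_pos_le_add fun ε hε => ?_
    refine csInf_le hSa_bdd ?_
    have hd : ∀ᶠ n : ℕ in atTop, d / (n : ℝ) < ε :=
      (tendsto_const_div_atTop_nhds_zero_nat d).eventually_lt_const hε
    have hc' : ∀ᶠ n : ℕ in atTop, b (n + 1) ≤ c := by
      obtain ⟨N, hN⟩ := eventually_atTop.mp hc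
      exact eventually_atTop.mpr ⟨N, fun n hn => hN (n + 1) (le_trans hn (Nat.le_succ n))⟩
    show ∀ᶠ n in atTop, a n ≤ c + ε
    filter_upwards [hkey, hd, hc', eventually_ge_atTop 1] with n h1 h2 h3 h4
    have hnpos : (0 : ℝ) < n := by exact_mod_cast h4
    have hone : (1 : ℝ) ≤ ((n : ℝ) + 1) / n := by
      rw [le_div_iff₀ hnpos]
      linarith
    have hb0 : b (n + 1) ≤ 0 := le_of_lt (lt_of_le_of_lt h3 h0)
    have hmul : ((n : ℝ) + 1) / n * b (n + 1) ≤ 1 * b (n + 1) :=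
      mul_le_mul_of_nonpos_right hone hb0
    calc a n ≤ d / n + ((n : ℝ) + 1) / n * b (n + 1) := h1
      _ ≤ ε + b (n + 1) := by linarith
      _ ≤ ε + c := by linarith
      _ = c + ε := add_comm _ _

end Aux

/-- **Main Theorem.** Fix `ω` and suppose `f ∈ L^∞(X,m)` has `λ(ω,f) < 0`.
With `A₊(θⁿω) = {𝓛_ω^{(n)} f > 0}` and `A₋(θⁿω) = {𝓛_ω^{(n)} f < 0}` one has
`E(A₊,ω) ≤ -λ(ω,f)` and `E(A₋,ω) ≤ -λ(ω,f)`; equivalently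
`limsup (1/n) log m(A₊^{(n)}(ω)) ≥ λ(ω,f)` and `limsup (1/n) log m(A₋^{(n)}(ω)) ≥ λ(ω,f)`. -/
theorem escape_rate_le_neg_lyapunov
    {Ω X : Type*} [MeasurableSpace X]
    (m : Measure X) [IsFiniteMeasure m]
    (θ : Ω → Ω) (T : Ω → X → X) (hT : ∀ ω', Measurable (T ω'))
    (L : Ω → (X → ℝ) → X → ℝ)
    (hLint : ∀ ω' (g : X → ℝ), Integrable g m → Integrable (L ω' g) m)
    (hL : ∀ ω' (g : X → ℝ), Integrable g m → ∀ B : Set X, MeasurableSet B →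
      ∫ x in B, L ω' g x ∂m = ∫ x in T ω' ⁻¹' B, g x ∂m)
    (ω : Ω) (f : X → ℝ) (hf : Integrable f m) (hfinf : MemLp f ⊤ m)
    (hlyap : Filter.limsup
        (fun n : ℕ => (n : ℝ)⁻¹ * Real.log (∫ x, |opIter θ L n ω f x| ∂m)) Filter.atTop
      < 0) :
    (-Filter.limsup
        (fun n : ℕ => (n : ℝ)⁻¹ * Real.log (m (plusSetIter θ T L f n ω)).toReal)
        Filter.atTop
      ≤ -Filter.limsup
        (fun n : ℕ => (n : ℝ)⁻¹ * Real.log (∫ x, |opIter θ L n ω f x| ∂m)) Filter.atTop) ∧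
    (-Filter.limsup
        (fun n : ℕ => (n : ℝ)⁻¹ * Real.log (m (minusSetIter θ T L f n ω)).toReal)
        Filter.atTop
      ≤ -Filter.limsup
        (fun n : ℕ => (n : ℝ)⁻¹ * Real.log (∫ x, |opIter θ L n ω f x| ∂m)) Filter.atTop) := by
  have hInt : ∀ n, Integrable (opIter θ L n ω f) m :=
    fun n => opIter_integrable hLint n ω f hf
  set A : ℕ → ℝ := fun n => ∫ x, |opIter θ L n ω f x| ∂m with hAdef
  set aseq : ℕ → ℝ := fun n => (n : ℝ)⁻¹ * Real.log (A n) with haseqdef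
  have hlyap' : limsup aseq atTop < 0 := hlyap
  -- get a negative eventual upper bound
  obtain ⟨a₀, ha₀mem, ha₀neg⟩ :
      ∃ a₀ ∈ {c : ℝ | ∀ᶠ n in atTop, aseq n ≤ c}, a₀ < 0 := by
    have h := hlyap'
    rw [limsup_eq] at h
    have hne : {c : ℝ | ∀ᶠ n in atTop, aseq n ≤ c}.Nonempty := by
      by_contra hh
      rw [Set.not_nonempty_iff_eq_empty] at hh
      rw [hh, Real.sInf_empty] at h
      exact lt_irrefl _ h
    exact exists_lt_of_csInf_lt hne h
  have hAnn : ∀ n, 0 ≤ A n := fun n => integral_nonneg fun x => abs_nonneg _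
  have hgood : ∀ᶠ n in atTop, 0 < A n ∧ Real.log (A n) ≤ n * a₀ := by
    filter_upwards [ha₀mem, eventually_ge_atTop 1] with n hn hn1
    have hnpos : (0 : ℝ) < n := by exact_mod_cast hn1
    have hlog : Real.log (A n) ≤ n * a₀ := by
      have h2 : (n : ℝ) * ((n : ℝ)⁻¹ * Real.log (A n)) ≤ (n : ℝ) * a₀ :=
        mul_le_mul_of_nonneg_left hn hnpos.le
      rwa [← mul_assoc, mul_inv_cancel₀ hnpos.ne', one_mul] at h2
    refine ⟨?_, hlog⟩
    rcases (hAnn n).eq_or_lt with he | hl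
    · exfalso
      rw [← he, Real.log_zero] at hlog
      nlinarith
    · exact hl
  have hIntEq : ∀ n, ∫ x, opIter θ L n ω f x ∂m = ∫ x, f x ∂m :=
    fun n => opIter_integral hLint hL n ω f hf
  -- ∫ f = 0
  have hf0 : ∫ x, f x ∂m = 0 := by
    by_contra hne
    have hpos : 0 < |∫ x, f x ∂m| := abs_pos.mpr hne
    obtain ⟨N, hN⟩ := eventually_atTop.mp hgood
    obtain ⟨n₁, hn₁⟩ := exists_nat_gt (Real.log |∫ x, f x ∂m| / a₀)
    set n := max N n₁ with hndef
    obtain ⟨hApos, hlog⟩ := hN n (le_max_left _ _)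
    have hcast : Real.log |∫ x, f x ∂m| / a₀ < (n : ℝ) :=
      lt_of_lt_of_le hn₁ (by exact_mod_cast le_max_right N n₁)
    have hlt : (n : ℝ) * a₀ < Real.log |∫ x, f x ∂m| := by
      rwa [div_lt_iff_of_neg ha₀neg] at hcast
    have hle2 : |∫ x, f x ∂m| ≤ A n := by
      rw [← hIntEq n]
      have := norm_integral_le_integral_norm (μ := m) (opIter θ L n ω f)
      simpa [Real.norm_eq_abs] using this
    have := Real.log_le_log hpos hle2
    linarith
  -- essential sup bound
  set C := (eLpNorm f ⊤ m).toReal with hCdef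
  have hCnn : 0 ≤ C := ENNReal.toReal_nonneg
  have hfC : ∀ᵐ x ∂m, ‖f x‖ ≤ C := by
    have h1 : ∀ᵐ x ∂m, (‖f x‖₊ : ℝ≥0∞) ≤ eLpNormEssSup f m := ae_le_eLpNormEssSup
    have hfin : eLpNormEssSup f m ≠ ⊤ := by
      rw [← eLpNorm_exponent_top]
      exact hfinf.2.ne
    filter_upwards [h1] with x hx
    have h2 := ENNReal.toReal_mono hfin hx
    simpa [hCdef, eLpNorm_exponent_top] using h2
  -- the two measure bounds
  have hplus : ∀ n, A n ≤ 2 * C * (m (plusSetIter θ T L f (n + 1) ω)).toReal := by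
    intro n
    obtain ⟨S, hSmeas, hSsub, hSle⟩ := keyPlus (θ := θ) hT hLint hL n ω f hf
    have h1 : A n = 2 * ∫ x, max (opIter θ L n ω f x) 0 ∂m := by
      have e : A n = ∫ x, (2 * max (opIter θ L n ω f x) 0 - opIter θ L n ω f x) ∂m := by
        refine integral_congr_ae (Eventually.of_forall fun x => ?_)
        show |opIter θ L n ω f x| = 2 * max (opIter θ L n ω f x) 0 - opIter θ L n ω f x
        rcases le_total 0 (opIter θ L n ω f x) with h | h
        · rw [abs_of_nonneg h, max_eq_left h]; ring
        · rw [abs_of_nonpos h, max_eq_right h]; ring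
      rw [e, integral_sub ((hInt n).pos_part.const_mul 2) (hInt n), integral_const_mul 2 _,
        hIntEq n, hf0, sub_zero]
    have h2 : ∫ x in S, f x ∂m ≤ C * (m S).toReal := by
      have hb := norm_setIntegral_le_of_norm_le_const_ae' (measure_lt_top m S)
        (hfC.mono fun x hx _ => hx)
      calc ∫ x in S, f x ∂m ≤ |∫ x in S, f x ∂m| := le_abs_self _
        _ ≤ C * (m S).toReal := by rwa [Real.norm_eq_abs] at hb
    have h3 : (m S).toReal ≤ (m (plusSetIter θ T L f (n + 1) ω)).toReal :=
      ENNReal.toReal_mono (measure_ne_top m _) (measure_mono hSsub)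
    calc A n = 2 * ∫ x, max (opIter θ L n ω f x) 0 ∂m := h1
      _ ≤ 2 * ∫ x in S, f x ∂m := by linarith
      _ ≤ 2 * (C * (m S).toReal) := by linarith
      _ ≤ 2 * C * (m (plusSetIter θ T L f (n + 1) ω)).toReal := by nlinarith
  have hminus : ∀ n, A n ≤ 2 * C * (m (minusSetIter θ T L f (n + 1) ω)).toReal := by
    intro n
    obtain ⟨S, hSmeas, hSsub, hSle⟩ := keyMinus (θ := θ) hT hLint hL n ω f hf
    have hminint : Integrable (fun x => min (opIter θ L n ω f x) 0) m := by
      have he : (fun x => min (opIter θ L n ω f x) 0)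
          = fun x => opIter θ L n ω f x - max (opIter θ L n ω f x) 0 := by
        funext x
        rcases le_total 0 (opIter θ L n ω f x) with h | h
        · rw [min_eq_right h, max_eq_left h, sub_self]
        · rw [min_eq_left h, max_eq_right h, sub_zero]
      rw [he]
      exact (hInt n).sub (hInt n).pos_part
    have h1 : A n = -(2 * ∫ x, min (opIter θ L n ω f x) 0 ∂m) := by
      have e : A n = ∫ x, (opIter θ L n ω f x - 2 * min (opIter θ L n ω f x) 0) ∂m := by
        refine integral_congr_ae (Eventually.of_forall fun x => ?_)
        show |opIter θ L n ω f x| = opIter θ L n ω f x - 2 * min (opIter θ L n ω f x) 0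
        rcases le_total 0 (opIter θ L n ω f x) with h | h
        · rw [abs_of_nonneg h, min_eq_right h]; ring
        · rw [abs_of_nonpos h, min_eq_left h]; ring
      rw [e, integral_sub (hInt n) (hminint.const_mul 2), integral_const_mul 2 _,
        hIntEq n, hf0, zero_sub]
    have h2 : -∫ x in S, f x ∂m ≤ C * (m S).toReal := by
      have hb := norm_setIntegral_le_of_norm_le_const_ae' (measure_lt_top m S)
        (hfC.mono fun x hx _ => hx)
      calc -∫ x in S, f x ∂m ≤ |∫ x in S, f x ∂m| := neg_le_abs _
        _ ≤ C * (m S).toReal := by rwa [Real.norm_eq_abs] at hb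
    have h3 : (m S).toReal ≤ (m (minusSetIter θ T L f (n + 1) ω)).toReal :=
      ENNReal.toReal_mono (measure_ne_top m _) (measure_mono hSsub)
    calc A n = -(2 * ∫ x, min (opIter θ L n ω f x) 0 ∂m) := h1
      _ ≤ -(2 * ∫ x in S, f x ∂m) := by linarith
      _ ≤ 2 * (C * (m S).toReal) := by linarith
      _ ≤ 2 * C * (m (minusSetIter θ T L f (n + 1) ω)).toReal := by nlinarith
  -- generic eventual key inequality
  have hkeygen : ∀ (P : ℕ → Set X),
      (∀ n, A n ≤ 2 * C * (m (P (n + 1))).toReal) →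
      ∀ᶠ n : ℕ in atTop, aseq n ≤ Real.log (2 * C) / n
        + ((n : ℝ) + 1) / n * ((((n + 1 : ℕ)) : ℝ)⁻¹ * Real.log (m (P (n + 1))).toReal) := by
    intro P hP
    filter_upwards [hgood, eventually_ge_atTop 1] with n hg hn1
    obtain ⟨hApos, _⟩ := hg
    have hnpos : (0 : ℝ) < n := by exact_mod_cast hn1
    have hprod : 0 < 2 * C * (m (P (n + 1))).toReal := lt_of_lt_of_le hApos (hP n)
    have htnn : 0 ≤ (m (P (n + 1))).toReal := ENNReal.toReal_nonneg
    have h2C : 0 < 2 * C := by nlinarith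
    have hmP : 0 < (m (P (n + 1))).toReal := by nlinarith
    have hlogle : Real.log (A n) ≤ Real.log (2 * C) + Real.log (m (P (n + 1))).toReal := by
      rw [← Real.log_mul h2C.ne' hmP.ne']
      exact Real.log_le_log hApos (hP n)
    have hcast : (((n + 1 : ℕ)) : ℝ) = (n : ℝ) + 1 := by push_cast; ring
    calc aseq n = (n : ℝ)⁻¹ * Real.log (A n) := rfl
      _ ≤ (n : ℝ)⁻¹ * (Real.log (2 * C) + Real.log (m (P (n + 1))).toReal) :=
          mul_le_mul_of_nonneg_left hlogle (inv_nonneg.mpr hnpos.le)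
      _ = Real.log (2 * C) / n
          + ((n : ℝ) + 1) / n * ((((n + 1 : ℕ)) : ℝ)⁻¹ * Real.log (m (P (n + 1))).toReal) := by
          rw [hcast]
          field_simp
  have hPlim : limsup aseq atTop
      ≤ limsup (fun n : ℕ => (n : ℝ)⁻¹ * Real.log (m (plusSetIter θ T L f n ω)).toReal)
        atTop :=
    aux_limsup hlyap' _ (Real.log (2 * C)) (seq_bounded _)
      (hkeygen (fun n => plusSetIter θ T L f n ω) hplus)
  have hMlim : limsup aseq atTop
      ≤ limsup (fun n : ℕ => (n : ℝ)⁻¹ * Real.log (m (minusSetIter θ T L f n ω)).toReal)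
        atTop :=
    aux_limsup hlyap' _ (Real.log (2 * C)) (seq_bounded _)
      (hkeygen (fun n => minusSetIter θ T L f n ω) hminus)
  exact ⟨neg_le_neg hPlim, neg_le_neg hMlim⟩
end

section
/- Suppose h : Ω → L^∞(X,m) satisfies δ ≤ h_ω ≤ H m-almost everywhere for constants 0 < δ ≤ H < ∞ and 𝓛_ω h_ω = h_{θω} for almost every ω (a preserved positive random density), and suppose g : Ω → L^∞(X,m) satisfies ‖g_ω‖_{L^∞} ≤ G for all ω and 𝓛_ω g_ω = 0 for almost every ω. Let ρ < 0. Then for each ω the series f_ω := Σ_{n=0}^∞ e^{ρn} ((g_{θⁿω}/h_{θⁿω}) ∘ T_ω^{(n)}) · h_ω converges absolutely in L^∞(X,m), and 𝓛_ω f_ω = e^{ρ} f_{θω} for almost every ω. -/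
open MeasureTheory Filter
open scoped ENNReal NNReal

section Aux

variable {Ω X : Type*} [MeasurableSpace Ω] [MeasurableSpace X]

lemma mapIter_measurable (θ : Ω → Ω) (T : Ω → X → X) (hT : ∀ ω, Measurable (T ω)) :
    ∀ (n : ℕ) (ω : Ω), Measurable (mapIter θ T n ω)
  | 0, ω => measurable_id
  | n + 1, ω => (mapIter_measurable θ T hT n (θ ω)).comp (hT ω)

lemma null_preimage (m : Measure X) [IsFiniteMeasure m] (T : Ω → X → X)
    (hT : ∀ ω, Measurable (T ω))
    (L : Ω → (X → ℝ) → X → ℝ)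
    (hL : ∀ ω (g : X → ℝ), Integrable g m → ∀ B : Set X, MeasurableSet B →
      ∫ x in B, L ω g x ∂m = ∫ x in T ω ⁻¹' B, g x ∂m)
    (ω : Ω) {B : Set X} (hB : MeasurableSet B) (hB0 : m B = 0) :
    m (T ω ⁻¹' B) = 0 := by
  have h1 := hL ω (fun _ => (1 : ℝ)) (integrable_const 1) B hB
  rw [Measure.restrict_eq_zero.mpr hB0, integral_zero_measure, setIntegral_const,
    smul_eq_mul, mul_one] at h1
  have h2 : (m (T ω ⁻¹' B)).toReal = 0 := h1.symm
  rw [ENNReal.toReal_eq_zero_iff] at h2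
  exact h2.resolve_right (measure_ne_top m _)

lemma ae_comp_T (m : Measure X) [IsFiniteMeasure m] (T : Ω → X → X)
    (hT : ∀ ω, Measurable (T ω))
    (L : Ω → (X → ℝ) → X → ℝ)
    (hL : ∀ ω (g : X → ℝ), Integrable g m → ∀ B : Set X, MeasurableSet B →
      ∫ x in B, L ω g x ∂m = ∫ x in T ω ⁻¹' B, g x ∂m)
    (ω : Ω) {P : X → Prop} (hP : ∀ᵐ x ∂m, P x) :
    ∀ᵐ x ∂m, P (T ω x) := by
  rw [ae_iff] at hP ⊢
  have hsub : {x | ¬P (T ω x)} ⊆ T ω ⁻¹' (toMeasurable m {x | ¬P x}) :=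
    fun x hx => subset_toMeasurable m _ hx
  refine measure_mono_null hsub (null_preimage m T hT L hL ω
    (measurableSet_toMeasurable m _) ?_)
  rwa [measure_toMeasurable]

lemma ae_comp_iter (m : Measure X) [IsFiniteMeasure m] (θ : Ω → Ω) (T : Ω → X → X)
    (hT : ∀ ω, Measurable (T ω))
    (L : Ω → (X → ℝ) → X → ℝ)
    (hL : ∀ ω (g : X → ℝ), Integrable g m → ∀ B : Set X, MeasurableSet B →
      ∫ x in B, L ω g x ∂m = ∫ x in T ω ⁻¹' B, g x ∂m) :
    ∀ (n : ℕ) (ω : Ω) {P : X → Prop}, (∀ᵐ x ∂m, P x) →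
      ∀ᵐ x ∂m, P (mapIter θ T n ω x)
  | 0, ω, P, hP => hP
  | n + 1, ω, P, hP =>
    ae_comp_T m T hT L hL ω (ae_comp_iter m θ T hT L hL n (θ ω) hP)

end Aux

/-- Suppose `h : Ω → L^∞` is a preserved positive random density with
`δ ≤ h_ω ≤ H` m-a.e. (`0 < δ ≤ H < ∞`) and `g : Ω → L^∞` satisfies `‖g_ω‖_∞ ≤ G` and
`𝓛_ω g_ω = 0` a.e.  Let `ρ < 0`.  Then the series
`f_ω = Σ_{n≥0} e^{ρn} ((g_{θⁿω}/h_{θⁿω}) ∘ T_ω^{(n)}) · h_ω` converges absolutely in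
`L^∞(X,m)`, and `𝓛_ω f_ω = e^ρ f_{θω}` for a.e. `ω`. -/
theorem series_eigenfunction_construction
    {Ω X : Type*} [MeasurableSpace Ω] [MeasurableSpace X]
    (ℙ : Measure Ω) [IsProbabilityMeasure ℙ]
    (m : Measure X) [IsFiniteMeasure m]
    (θ : Ω → Ω) (hθ : MeasurePreserving θ ℙ ℙ) (hθinv : Function.Bijective θ)
    (T : Ω → X → X) (hT : ∀ ω, Measurable (T ω))
    (L : Ω → (X → ℝ) → X → ℝ)
    (hLint : ∀ ω (g : X → ℝ), Integrable g m → Integrable (L ω g) m)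
    (hL : ∀ ω (g : X → ℝ), Integrable g m → ∀ B : Set X, MeasurableSet B →
      ∫ x in B, L ω g x ∂m = ∫ x in T ω ⁻¹' B, g x ∂m)
    (h g : Ω → X → ℝ)
    (hhmeas : ∀ ω, Measurable (h ω)) (hgmeas : ∀ ω, Measurable (g ω))
    (δ H G : ℝ) (hδ : 0 < δ) (hδH : δ ≤ H)
    (hhbd : ∀ ω, ∀ᵐ x ∂m, δ ≤ h ω x ∧ h ω x ≤ H)
    (hpres : ∀ᵐ ω ∂ℙ, L ω (h ω) =ᵐ[m] h (θ ω))
    (hgbd : ∀ ω, ∀ᵐ x ∂m, |g ω x| ≤ G)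
    (hgzero : ∀ᵐ ω ∂ℙ, L ω (g ω) =ᵐ[m] fun _ => (0 : ℝ))
    (ρ : ℝ) (hρ : ρ < 0)
    (F : Ω → X → ℝ)
    (hF : ∀ ω x, F ω x = ∑' n : ℕ,
      Real.exp (ρ * n) *
        (g (θ^[n] ω) (mapIter θ T n ω x) / h (θ^[n] ω) (mapIter θ T n ω x)) * h ω x) :
    (∀ ω, (∑' n : ℕ, eLpNorm
        (fun x => Real.exp (ρ * n) *
          (g (θ^[n] ω) (mapIter θ T n ω x) / h (θ^[n] ω) (mapIter θ T n ω x)) * h ω x)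
        ⊤ m) < ⊤) ∧
    (∀ᵐ ω ∂ℙ, L ω (F ω) =ᵐ[m] fun x => Real.exp ρ * F (θ ω) x) := by
  classical
  set G' : ℝ := max G 0 with hG'def
  have hG'0 : 0 ≤ G' := le_max_right _ _
  have hH0 : 0 ≤ H := hδ.le.trans hδH
  -- the quotient sequence
  set c : Ω → ℕ → X → ℝ := fun ω n x =>
    Real.exp (ρ * n) *
      (g (θ^[n] ω) (mapIter θ T n ω x) / h (θ^[n] ω) (mapIter θ T n ω x)) with hcdef
  -- geometric bounds
  set C : ℕ → ℝ := fun n => Real.exp (ρ * n) * (G' / δ) * H with hCdef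
  have hCq_sum : Summable (fun n : ℕ => Real.exp (ρ * n) * (G' / δ)) := by
    have h0 : Summable (fun n : ℕ => Real.exp (↑n * ρ)) :=
      Real.summable_exp_nat_mul_iff.mpr hρ
    have h1 := h0.mul_right (G' / δ)
    have : (fun n : ℕ => Real.exp (ρ * n) * (G' / δ))
        = fun n : ℕ => Real.exp (↑n * ρ) * (G' / δ) := by
      funext n; rw [mul_comm ρ]
    rw [this]; exact h1
  have hCsum : Summable C := hCq_sum.mul_right H
  have hC0 : ∀ n, 0 ≤ C n := fun n =>
    mul_nonneg (mul_nonneg (Real.exp_pos _).le (div_nonneg hG'0 hδ.le)) hH0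
  set S : ℝ := ∑' n, C n with hSdef
  have hS0 : 0 ≤ S := tsum_nonneg hC0
  -- good sets
  set Good : Ω → Set X := fun ω => {x | ∀ n : ℕ,
    (δ ≤ h (θ^[n] ω) (mapIter θ T n ω x) ∧ h (θ^[n] ω) (mapIter θ T n ω x) ≤ H) ∧
      |g (θ^[n] ω) (mapIter θ T n ω x)| ≤ G} with hGooddef
  have hGood : ∀ ω, ∀ᵐ x ∂m, x ∈ Good ω := by
    intro ω
    have : ∀ n : ℕ, ∀ᵐ x ∂m,
        (δ ≤ h (θ^[n] ω) (mapIter θ T n ω x) ∧ h (θ^[n] ω) (mapIter θ T n ω x) ≤ H) ∧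
          |g (θ^[n] ω) (mapIter θ T n ω x)| ≤ G := fun n =>
      ae_comp_iter m θ T hT L hL n ω ((hhbd (θ^[n] ω)).and (hgbd (θ^[n] ω)))
    exact ae_all_iff.mpr this
  have hstep : ∀ ω x, x ∈ Good ω → T ω x ∈ Good (θ ω) := by
    intro ω x hx n
    have h1 := hx (n + 1)
    rwa [Function.iterate_succ_apply] at h1
  -- pointwise bounds
  have hcbd : ∀ ω x, x ∈ Good ω → ∀ n : ℕ, |c ω n x| ≤ Real.exp (ρ * n) * (G' / δ) := by
    intro ω x hx n
    obtain ⟨⟨hd, hh⟩, hg1⟩ := hx n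
    have hpos : 0 < h (θ^[n] ω) (mapIter θ T n ω x) := hδ.trans_le hd
    simp only [hcdef, abs_mul, abs_of_pos (Real.exp_pos _), abs_div]
    refine mul_le_mul_of_nonneg_left ?_ (Real.exp_pos _).le
    exact div_le_div₀ hG'0 (hg1.trans (le_max_left _ _)) hδ
      (by rw [abs_of_pos hpos]; exact hd)
  have hbound : ∀ ω x, x ∈ Good ω → ∀ n : ℕ, |c ω n x * h ω x| ≤ C n := by
    intro ω x hx n
    obtain ⟨⟨hd0, hh0⟩, _⟩ := hx 0
    have hx0pos : 0 < h ω x := hδ.trans_le hd0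
    rw [hCdef, abs_mul]
    have h1 := hcbd ω x hx n
    have h2 : |h ω x| ≤ H := by rw [abs_of_pos hx0pos]; exact hh0
    exact mul_le_mul h1 h2 (abs_nonneg _)
      (mul_nonneg (Real.exp_pos _).le (div_nonneg hG'0 hδ.le))
  -- pointwise bound on F
  have hFptbd : ∀ ω x, x ∈ Good ω → ‖F ω x‖ ≤ S := by
    intro ω x hx
    rw [hF]
    exact tsum_of_norm_bounded hCsum.hasSum fun n => by
      rw [Real.norm_eq_abs]; exact hbound ω x hx n
  -- measurability
  have hterm_meas : ∀ ω (n : ℕ), Measurable (fun x => c ω n x * h ω x) := by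
    intro ω n
    exact ((measurable_const.mul
      (((hgmeas _).comp (mapIter_measurable θ T hT n ω)).div
        ((hhmeas _).comp (mapIter_measurable θ T hT n ω)))).mul (hhmeas ω))
  have hFmeas : ∀ ω, AEMeasurable (F ω) m := by
    intro ω
    apply aemeasurable_of_tendsto_metrizable_ae'
      (f := fun N x => ∑ n ∈ Finset.range N, c ω n x * h ω x)
    · exact fun N => (Finset.measurable_sum _ fun n _ => hterm_meas ω n).aemeasurable
    · filter_upwards [hGood ω] with x hx
      have hsum : Summable (fun n => c ω n x * h ω x) :=
        Summable.of_norm_bounded hCsum fun n => by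
          rw [Real.norm_eq_abs]; exact hbound ω x hx n
      rw [hF ω x]
      exact hsum.hasSum.tendsto_sum_nat
  -- integrability
  have hhint : ∀ ω, Integrable (h ω) m := by
    intro ω
    refine Integrable.mono' (integrable_const H) (hhmeas ω).aestronglyMeasurable ?_
    filter_upwards [hhbd ω] with x hx
    rw [Real.norm_eq_abs, abs_of_pos (hδ.trans_le hx.1)]; exact hx.2
  have hgint : ∀ ω, Integrable (g ω) m := by
    intro ω
    refine Integrable.mono' (integrable_const G') (hgmeas ω).aestronglyMeasurable ?_
    filter_upwards [hgbd ω] with x hx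
    rw [Real.norm_eq_abs]; exact hx.trans (le_max_left _ _)
  have hFint : ∀ ω, Integrable (F ω) m := by
    intro ω
    refine Integrable.mono' (integrable_const S) (hFmeas ω).aestronglyMeasurable ?_
    filter_upwards [hGood ω] with x hx
    exact hFptbd ω x hx
  -- quasi measure preserving
  have hqmp : ∀ ω, Measure.QuasiMeasurePreserving (T ω) m m := by
    intro ω
    refine ⟨hT ω, Measure.AbsolutelyContinuous.mk fun B hB h0 => ?_⟩
    rw [Measure.map_apply (hT ω) hB]
    exact null_preimage m T hT L hL ω hB h0
  constructor
  · -- Part 1: absolute convergence in L^∞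
    intro ω
    have hbd : ∀ n : ℕ, eLpNorm (fun x => c ω n x * h ω x) ⊤ m ≤ ENNReal.ofReal (C n) := by
      intro n
      have hae : ∀ᵐ x ∂m, ‖c ω n x * h ω x‖ ≤ C n := by
        filter_upwards [hGood ω] with x hx
        rw [Real.norm_eq_abs]; exact hbound ω x hx n
      calc eLpNorm (fun x => c ω n x * h ω x) ⊤ m
          ≤ m Set.univ ^ (⊤ : ℝ≥0∞).toReal⁻¹ * ENNReal.ofReal (C n) :=
            eLpNorm_le_of_ae_bound hae
        _ = ENNReal.ofReal (C n) := by
            simp [ENNReal.toReal_top]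
    calc (∑' n : ℕ, eLpNorm (fun x => c ω n x * h ω x) ⊤ m)
        ≤ ∑' n : ℕ, ENNReal.ofReal (C n) := ENNReal.tsum_le_tsum hbd
      _ = ENNReal.ofReal S := (ENNReal.ofReal_tsum_of_nonneg hC0 hCsum).symm
      _ < ⊤ := ENNReal.ofReal_lt_top
  · -- Part 2: eigenfunction equation
    filter_upwards [hpres, hgzero] with ω hpω hgω
    set φ : X → ℝ := fun y => F (θ ω) y / h (θ ω) y with hφdef
    have hφmeas : AEMeasurable φ m := (hFmeas (θ ω)).div (hhmeas (θ ω)).aemeasurable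
    -- the mapped density measure
    set ν : Measure X := m.withDensity fun x => ((h ω x).toNNReal : ℝ≥0∞) with hνdef
    have hhnn : ∀ ω', (0 : X → ℝ) ≤ᵐ[m] h ω' := fun ω' => by
      filter_upwards [hhbd ω'] with x hx; exact hδ.le.trans hx.1
    have dmap : ν.map (T ω) = m.withDensity fun x => ((h (θ ω) x).toNNReal : ℝ≥0∞) := by
      ext B hB
      rw [Measure.map_apply (hT ω) hB, hνdef, withDensity_apply _ ((hT ω) hB),
        withDensity_apply _ hB]
      have e1 : (∫⁻ x in T ω ⁻¹' B, ((h ω x).toNNReal : ℝ≥0∞) ∂m)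
          = ENNReal.ofReal (∫ x in T ω ⁻¹' B, h ω x ∂m) :=
        (ofReal_integral_eq_lintegral_ofReal ((hhint ω).integrableOn)
          (ae_restrict_of_ae (hhnn ω))).symm
      have e2 : (∫⁻ x in B, ((h (θ ω) x).toNNReal : ℝ≥0∞) ∂m)
          = ENNReal.ofReal (∫ x in B, h (θ ω) x ∂m) :=
        (ofReal_integral_eq_lintegral_ofReal ((hhint (θ ω)).integrableOn)
          (ae_restrict_of_ae (hhnn (θ ω)))).symm
      rw [e1, e2]
      congr 1
      rw [← hL ω (h ω) (hhint ω) B hB]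
      exact integral_congr_ae (ae_restrict_of_ae hpω)
    have hac : ν.map (T ω) ≪ m := by
      rw [dmap]; exact withDensity_absolutelyContinuous m _
    -- key change of variables
    have key : ∀ B : Set X, MeasurableSet B →
        ∫ x in T ω ⁻¹' B, φ (T ω x) * h ω x ∂m = ∫ y in B, F (θ ω) y ∂m := by
      intro B hB
      have h1 : ∫ x in T ω ⁻¹' B, φ (T ω x) * h ω x ∂m
          = ∫ x in T ω ⁻¹' B, (h ω x).toNNReal • φ (T ω x) ∂m := by
        refine integral_congr_ae (ae_restrict_of_ae ?_)
        filter_upwards [hhnn ω] with x hx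
        rw [NNReal.smul_def, smul_eq_mul, Real.coe_toNNReal _ hx, mul_comm]
      have h2 : ∫ x in T ω ⁻¹' B, (h ω x).toNNReal • φ (T ω x) ∂m
          = ∫ x in T ω ⁻¹' B, φ (T ω x) ∂ν :=
        (setIntegral_withDensity_eq_setIntegral_smul
          ((hhmeas ω).real_toNNReal) _ ((hT ω) hB)).symm
      have h3 : ∫ x in T ω ⁻¹' B, φ (T ω x) ∂ν = ∫ y in B, φ y ∂(ν.map (T ω)) :=
        (setIntegral_map hB (hφmeas.mono_ac hac).aestronglyMeasurable
          (hT ω).aemeasurable).symm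
      have h4 : ∫ y in B, φ y ∂(ν.map (T ω))
          = ∫ y in B, (h (θ ω) y).toNNReal • φ y ∂m := by
        rw [dmap]
        exact setIntegral_withDensity_eq_setIntegral_smul
          ((hhmeas (θ ω)).real_toNNReal) _ hB
      have h5 : ∫ y in B, (h (θ ω) y).toNNReal • φ y ∂m = ∫ y in B, F (θ ω) y ∂m := by
        refine integral_congr_ae (ae_restrict_of_ae ?_)
        filter_upwards [hhbd (θ ω)] with y hy
        have hpos : 0 < h (θ ω) y := hδ.trans_le hy.1
        rw [NNReal.smul_def, smul_eq_mul, Real.coe_toNNReal _ hpos.le, hφdef]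
        field_simp
      rw [h1, h2, h3, h4, h5]
    -- pointwise recursion
    have hrec : ∀ᵐ x ∂m, F ω x = g ω x + Real.exp ρ * (φ (T ω x) * h ω x) := by
      filter_upwards [hGood ω] with x hx
      have hy : T ω x ∈ Good (θ ω) := hstep ω x hx
      have hcsum : Summable (fun n => c ω n x) :=
        Summable.of_norm_bounded hCq_sum fun n => by
          rw [Real.norm_eq_abs]; exact hcbd ω x hx n
      have hbsum : Summable (fun n => c (θ ω) n (T ω x)) :=
        Summable.of_norm_bounded hCq_sum fun n => by
          rw [Real.norm_eq_abs]; exact hcbd (θ ω) (T ω x) hy n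
      have hd0 : δ ≤ h ω x := (hx 0).1.1
      have hd0' : δ ≤ h (θ ω) (T ω x) := (hy 0).1.1
      have hne : h ω x ≠ 0 := (hδ.trans_le hd0).ne'
      have hne' : h (θ ω) (T ω x) ≠ 0 := (hδ.trans_le hd0').ne'
      have hFx : F ω x = (∑' n, c ω n x) * h ω x := by
        rw [hF, ← tsum_mul_right]
      have hFy : F (θ ω) (T ω x) = (∑' n, c (θ ω) n (T ω x)) * h (θ ω) (T ω x) := by
        rw [hF, ← tsum_mul_right]
      have hc0 : c ω 0 x = g ω x / h ω x := by
        simp [hcdef, mapIter]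
      have hcs : ∀ n : ℕ, c ω (n + 1) x = Real.exp ρ * c (θ ω) n (T ω x) := by
        intro n
        have hmi : mapIter θ T (n + 1) ω x = mapIter θ T n (θ ω) (T ω x) := rfl
        rw [hcdef]
        simp only [hmi, Function.iterate_succ_apply]
        rw [show (((n : ℕ) + 1 : ℕ) : ℝ) = (n : ℝ) + 1 by push_cast; ring,
          show ρ * ((n : ℝ) + 1) = ρ + ρ * n by ring, Real.exp_add]
        ring
      have hφy : φ (T ω x) = ∑' n, c (θ ω) n (T ω x) := by
        simp only [hφdef]
        rw [hFy, mul_div_cancel_right₀ _ hne']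
      calc F ω x = (∑' n, c ω n x) * h ω x := hFx
        _ = (c ω 0 x + ∑' n, c ω (n + 1) x) * h ω x := by
            rw [Summable.tsum_eq_zero_add hcsum]
        _ = (g ω x / h ω x + Real.exp ρ * ∑' n, c (θ ω) n (T ω x)) * h ω x := by
            rw [hc0, tsum_congr hcs, tsum_mul_left]
        _ = g ω x + Real.exp ρ * (φ (T ω x) * h ω x) := by
            rw [add_mul, div_mul_cancel₀ _ hne, hφy]; ring
    -- integrability of the second summand
    have hψint : Integrable (fun x => Real.exp ρ * (φ (T ω x) * h ω x)) m := by
      refine Integrable.mono' (integrable_const (Real.exp ρ * (S / δ * H)))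
        ((((hφmeas.comp_quasiMeasurePreserving (hqmp ω)).mul
          (hhmeas ω).aemeasurable).const_mul (Real.exp ρ)).aestronglyMeasurable) ?_
      filter_upwards [hGood ω] with x hx
      have hy : T ω x ∈ Good (θ ω) := hstep ω x hx
      have hd0 : δ ≤ h ω x := (hx 0).1.1
      have hh0 : h ω x ≤ H := (hx 0).1.2
      have hd0' : δ ≤ h (θ ω) (T ω x) := (hy 0).1.1
      have hFyb : |F (θ ω) (T ω x)| ≤ S := hFptbd (θ ω) (T ω x) hy
      have hφb : |φ (T ω x)| ≤ S / δ := by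
        simp only [hφdef]
        rw [abs_div]
        exact div_le_div₀ hS0 hFyb hδ (by rw [abs_of_pos (hδ.trans_le hd0')]; exact hd0')
      have hhb : |h ω x| ≤ H := by
        rw [abs_of_pos (hδ.trans_le hd0)]; exact hh0
      rw [Real.norm_eq_abs, abs_mul, abs_mul, abs_of_pos (Real.exp_pos _)]
      exact mul_le_mul_of_nonneg_left
        (mul_le_mul hφb hhb (abs_nonneg _) (div_nonneg hS0 hδ.le)) (Real.exp_pos _).le
    -- the set-integral identity
    have hsetint : ∀ B : Set X, MeasurableSet B → m B < ⊤ →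
        ∫ x in B, L ω (F ω) x ∂m = ∫ x in B, Real.exp ρ * F (θ ω) x ∂m := by
      intro B hB _
      rw [hL ω (F ω) (hFint ω) B hB]
      calc ∫ x in T ω ⁻¹' B, F ω x ∂m
          = ∫ x in T ω ⁻¹' B, (g ω x + Real.exp ρ * (φ (T ω x) * h ω x)) ∂m :=
            integral_congr_ae (ae_restrict_of_ae hrec)
        _ = (∫ x in T ω ⁻¹' B, g ω x ∂m)
            + ∫ x in T ω ⁻¹' B, Real.exp ρ * (φ (T ω x) * h ω x) ∂m :=
            integral_add ((hgint ω).integrableOn) (hψint.integrableOn)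
        _ = 0 + Real.exp ρ * ∫ x in T ω ⁻¹' B, φ (T ω x) * h ω x ∂m := by
            rw [← hL ω (g ω) (hgint ω) B hB, integral_const_mul]
            congr 1
            rw [integral_congr_ae (ae_restrict_of_ae hgω)]
            simp
        _ = Real.exp ρ * ∫ y in B, F (θ ω) y ∂m := by rw [key B hB, zero_add]
        _ = ∫ y in B, Real.exp ρ * F (θ ω) y ∂m := (integral_const_mul _ _).symm
    exact ae_eq_of_forall_setIntegral_eq_of_sigmaFinite
      (fun s hs _ => (hLint ω (F ω) (hFint ω)).integrableOn)
      (fun s hs _ => ((hFint (θ ω)).const_mul _).integrableOn)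
      hsetint
end

section
/- Fix ω ∈ Ω and λ₁ ∈ ℝ, and assume: (a) there exists a nonzero v₁ ∈ ℝ^k such that lim_{n→∞}(1/n) log ‖v₁ A^{(n)}(ω)‖₁ exists and equals λ₁; and (b) for every w ∈ ℝ^k, limsup_{n→∞}(1/n) log ‖w A^{(n)}(ω)‖₁ ≤ λ₁. Then for every v ∈ ℝ^k with all coordinates strictly positive, the limit lim_{n→∞}(1/n) log ‖v A^{(n)}(ω)‖₁ exists and equals λ₁. -/
open MeasureTheory Filter Topology

noncomputable def matIter {Ω : Type*} {k : ℕ} (θ : Ω → Ω)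
    (A : Ω → Matrix (Fin k) (Fin k) ℝ) : ℕ → Ω → Matrix (Fin k) (Fin k) ℝ
  | 0, _ => 1
  | n + 1, ω => A ω * matIter θ A n (θ ω)

noncomputable def l1norm {k : ℕ} (v : Fin k → ℝ) : ℝ := ∑ i, |v i|

lemma l1norm_nonneg {k : ℕ} (v : Fin k → ℝ) : 0 ≤ l1norm v :=
  Finset.sum_nonneg fun i _ => abs_nonneg _

lemma eq_zero_of_l1norm_eq_zero {k : ℕ} {v : Fin k → ℝ} (h : l1norm v = 0) : v = 0 := by
  funext i
  have := (Finset.sum_eq_zero_iff_of_nonneg (fun i _ => abs_nonneg (v i))).1 h i (Finset.mem_univ i)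
  simpa [abs_eq_zero] using this

/-- entries of matIter are natural numbers -/
lemma matIter_nat {Ω : Type*} {k : ℕ} (θ : Ω → Ω) (A : Ω → Matrix (Fin k) (Fin k) ℝ)
    (h01 : ∀ ω i j, A ω i j = 0 ∨ A ω i j = 1) :
    ∀ n ω i j, ∃ m : ℕ, matIter θ A n ω i j = (m : ℝ) := by
  intro n
  induction n with
  | zero =>
    intro ω i j
    by_cases h : i = j
    · exact ⟨1, by simp [matIter, Matrix.one_apply, h]⟩
    · exact ⟨0, by simp [matIter, Matrix.one_apply, h]⟩
  | succ n ih =>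
    intro ω i j
    have h : ∀ l : Fin k, ∃ m : ℕ, A ω i l * matIter θ A n (θ ω) l j = (m : ℝ) := by
      intro l
      obtain ⟨m, hm⟩ := ih (θ ω) l j
      rcases h01 ω i l with h | h
      · exact ⟨0, by simp [h]⟩
      · exact ⟨m, by simp [h, hm]⟩
    choose f hf using h
    refine ⟨∑ l, f l, ?_⟩
    simp only [matIter, Matrix.mul_apply]
    rw [Finset.sum_congr rfl (fun l _ => hf l)]
    push_cast; ring

lemma matIter_nonneg {Ω : Type*} {k : ℕ} (θ : Ω → Ω) (A : Ω → Matrix (Fin k) (Fin k) ℝ)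
    (h01 : ∀ ω i j, A ω i j = 0 ∨ A ω i j = 1) (n : ℕ) (ω : Ω) (i j : Fin k) :
    0 ≤ matIter θ A n ω i j := by
  obtain ⟨m, hm⟩ := matIter_nat θ A h01 n ω i j
  rw [hm]; positivity

lemma matIter_add {Ω : Type*} {k : ℕ} (θ : Ω → Ω) (A : Ω → Matrix (Fin k) (Fin k) ℝ) :
    ∀ (n m : ℕ) (ω : Ω),
      matIter θ A (n + m) ω = matIter θ A n ω * matIter θ A m (θ^[n] ω) := by
  intro n
  induction n with
  | zero => intro m ω; simp [matIter]
  | succ n ih =>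
    intro m ω
    have : n + 1 + m = (n + m) + 1 := by ring
    rw [this]
    show A ω * matIter θ A (n + m) (θ ω) = (A ω * matIter θ A n (θ ω)) * matIter θ A m (θ^[n+1] ω)
    rw [ih m (θ ω), Matrix.mul_assoc, Function.iterate_succ_apply]

/-- comparison: if c * |v₁ i| ≤ v i for all i, and N has nonneg entries, then
    c * ‖v₁ N‖₁ ≤ ‖v N‖₁  (v nonneg) -/
lemma key_compare {k : ℕ} (v₁ v : Fin k → ℝ) (c : ℝ) (hc : 0 ≤ c)
    (hcv : ∀ i, c * |v₁ i| ≤ v i) (N : Matrix (Fin k) (Fin k) ℝ)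
    (hN : ∀ i j, 0 ≤ N i j) :
    c * l1norm (Matrix.vecMul v₁ N) ≤ l1norm (Matrix.vecMul v N) := by
  have hv : ∀ i, 0 ≤ v i := fun i => le_trans (by positivity) (hcv i)
  unfold l1norm
  rw [Finset.mul_sum]
  refine Finset.sum_le_sum fun j _ => ?_
  have h1 : |Matrix.vecMul v₁ N j| ≤ ∑ i, |v₁ i| * N i j := by
    rw [Matrix.vecMul, dotProduct]
    refine le_trans (Finset.abs_sum_le_sum_abs _ _) (Finset.sum_le_sum fun i _ => ?_)
    rw [abs_mul, abs_of_nonneg (hN i j)]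
  have h2 : Matrix.vecMul v N j = ∑ i, v i * N i j := rfl
  have h3 : 0 ≤ Matrix.vecMul v N j := by
    rw [h2]; exact Finset.sum_nonneg fun i _ => mul_nonneg (hv i) (hN i j)
  rw [abs_of_nonneg h3, h2]
  calc c * |Matrix.vecMul v₁ N j| ≤ c * ∑ i, |v₁ i| * N i j :=
        mul_le_mul_of_nonneg_left h1 hc
    _ = ∑ i, (c * |v₁ i|) * N i j := by rw [Finset.mul_sum]; ring_nf
    _ ≤ ∑ i, v i * N i j := Finset.sum_le_sum fun i _ =>
        mul_le_mul_of_nonneg_right (hcv i) (hN i j)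

/-- upper bound: ‖w A^{(n)}‖₁ ≤ k^n ‖w‖₁ -/
lemma l1_upper {Ω : Type*} {k : ℕ} (θ : Ω → Ω) (A : Ω → Matrix (Fin k) (Fin k) ℝ)
    (h01 : ∀ ω i j, A ω i j = 0 ∨ A ω i j = 1) :
    ∀ (n : ℕ) (ω : Ω) (w : Fin k → ℝ),
      l1norm (Matrix.vecMul w (matIter θ A n ω)) ≤ (k : ℝ)^n * l1norm w := by
  intro n
  induction n with
  | zero => intro ω w; simp [matIter, l1norm]
  | succ n ih =>
    intro ω w
    have hstep : l1norm (Matrix.vecMul w (A ω)) ≤ (k : ℝ) * l1norm w := by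
      unfold l1norm
      have : ∀ j, |Matrix.vecMul w (A ω) j| ≤ ∑ i, |w i| := by
        intro j
        rw [Matrix.vecMul, dotProduct]
        refine le_trans (Finset.abs_sum_le_sum_abs _ _) (Finset.sum_le_sum fun i _ => ?_)
        rw [abs_mul]
        rcases h01 ω i j with h | h <;> simp [h, abs_nonneg]
      calc ∑ j, |Matrix.vecMul w (A ω) j| ≤ ∑ _j : Fin k, ∑ i, |w i| :=
            Finset.sum_le_sum fun j _ => this j
        _ = (k : ℝ) * ∑ i, |w i| := by simp [Finset.sum_const, nsmul_eq_mul]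
    have : Matrix.vecMul w (matIter θ A (n+1) ω)
        = Matrix.vecMul (Matrix.vecMul w (A ω)) (matIter θ A n (θ ω)) := by
      rw [Matrix.vecMul_vecMul]; rfl
    rw [this]
    calc l1norm (Matrix.vecMul (Matrix.vecMul w (A ω)) (matIter θ A n (θ ω)))
        ≤ (k : ℝ)^n * l1norm (Matrix.vecMul w (A ω)) := ih (θ ω) _
      _ ≤ (k : ℝ)^n * ((k : ℝ) * l1norm w) := by
          apply mul_le_mul_of_nonneg_left hstep; positivity
      _ = (k : ℝ)^(n+1) * l1norm w := by ring

/-- lower bound: for positive v, ‖v N‖₁ is 0 or ≥ min v, when N has ℕ entries -/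
lemma l1_lower {k : ℕ} (v : Fin k → ℝ) (hv : ∀ i, 0 < v i) (m : ℝ)
    (hm : ∀ i, m ≤ v i) (N : Matrix (Fin k) (Fin k) ℝ)
    (hN : ∀ i j, ∃ c : ℕ, N i j = (c : ℝ)) :
    l1norm (Matrix.vecMul v N) = 0 ∨ m ≤ l1norm (Matrix.vecMul v N) := by
  have hN0 : ∀ i j, 0 ≤ N i j := by
    intro i j; obtain ⟨c, hc⟩ := hN i j; rw [hc]; positivity
  by_cases hz : ∀ i j, N i j = 0
  · left
    have : Matrix.vecMul v N = 0 := by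
      funext j
      simp only [Matrix.vecMul, dotProduct, Pi.zero_apply]
      exact Finset.sum_eq_zero fun i _ => by rw [hz i j, mul_zero]
    rw [this]; simp [l1norm]
  · right
    push_neg at hz
    obtain ⟨i, j, hij⟩ := hz
    obtain ⟨c, hc⟩ := hN i j
    have hc1 : (1 : ℝ) ≤ N i j := by
      rw [hc] at hij ⊢
      exact_mod_cast Nat.one_le_iff_ne_zero.2 (by exact_mod_cast hij)
    have h1 : m ≤ Matrix.vecMul v N j := by
      have : v i * N i j ≤ ∑ i', v i' * N i' j :=
        Finset.single_le_sum (fun i' _ => mul_nonneg (hv i').le (hN0 i' j)) (Finset.mem_univ i)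
      calc m ≤ v i := hm i
        _ = v i * 1 := (mul_one _).symm
        _ ≤ v i * N i j := mul_le_mul_of_nonneg_left hc1 (hv i).le
        _ ≤ ∑ i', v i' * N i' j := this
        _ = Matrix.vecMul v N j := rfl
    calc m ≤ Matrix.vecMul v N j := h1
      _ ≤ |Matrix.vecMul v N j| := le_abs_self _
      _ ≤ l1norm (Matrix.vecMul v N) := by
          unfold l1norm
          exact Finset.single_le_sum (f := fun j' => |Matrix.vecMul v N j'|)
            (fun j' _ => abs_nonneg _) (Finset.mem_univ j)
/-- Fix `ω` and `λ₁ ∈ ℝ` and assume: (a) there is a nonzero `v₁` with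
`lim (1/n) log ‖v₁ A^{(n)}(ω)‖₁ = λ₁`, and (b) for every `w`,
`limsup (1/n) log ‖w A^{(n)}(ω)‖₁ ≤ λ₁`.  Then for every strictly positive `v` the limit
`lim (1/n) log ‖v A^{(n)}(ω)‖₁` exists and equals `λ₁`. -/
theorem positive_vector_attains_top_exponent
    {Ω : Type*} [MeasurableSpace Ω]
    (ℙ : Measure Ω) [IsProbabilityMeasure ℙ]
    (θ : Ω → Ω) (hθ : MeasurePreserving θ ℙ ℙ) (hθinv : Function.Bijective θ)
    (k : ℕ) (hk : 2 ≤ k)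
    (A : Ω → Matrix (Fin k) (Fin k) ℝ)
    (hAmeas : ∀ i j, Measurable fun ω => A ω i j)
    (h01 : ∀ ω i j, A ω i j = 0 ∨ A ω i j = 1)
    (ω : Ω) (lam1 : ℝ)
    (ha : ∃ v₁ : Fin k → ℝ, v₁ ≠ 0 ∧
      Filter.Tendsto
        (fun n : ℕ => (n : ℝ)⁻¹ * Real.log (l1norm (Matrix.vecMul v₁ (matIter θ A n ω))))
        Filter.atTop (𝓝 lam1))
    (hb : ∀ w : Fin k → ℝ,
      Filter.limsup
        (fun n : ℕ => (n : ℝ)⁻¹ * Real.log (l1norm (Matrix.vecMul w (matIter θ A n ω))))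
        Filter.atTop ≤ lam1) :
    ∀ v : Fin k → ℝ, (∀ i, 0 < v i) →
      Filter.Tendsto
        (fun n : ℕ => (n : ℝ)⁻¹ * Real.log (l1norm (Matrix.vecMul v (matIter θ A n ω))))
        Filter.atTop (𝓝 lam1) := by
  intro v hv
  obtain ⟨v₁, hv₁ne, hg⟩ := ha
  set M := fun n => matIter θ A n ω with hM
  set f := fun n : ℕ => (n : ℝ)⁻¹ * Real.log (l1norm (Matrix.vecMul v (M n))) with hf
  set g := fun n : ℕ => (n : ℝ)⁻¹ * Real.log (l1norm (Matrix.vecMul v₁ (M n))) with hgdef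
  have hk0 : 0 < k := by omega
  haveI : Nonempty (Fin k) := ⟨⟨0, hk0⟩⟩
  -- min of v
  set vmin := Finset.univ.inf' Finset.univ_nonempty v with hvmin
  have hvmin_le : ∀ i, vmin ≤ v i := fun i => Finset.inf'_le v (Finset.mem_univ i)
  have hvmin_pos : 0 < vmin := by
    obtain ⟨i, _, hi⟩ := Finset.exists_mem_eq_inf' (Finset.univ_nonempty) v
    rw [hvmin, hi]; exact hv i
  -- positivity of l1norm v₁ and l1norm v
  have hv₁pos : 0 < l1norm v₁ :=
    lt_of_le_of_ne (l1norm_nonneg v₁) fun h => hv₁ne (eq_zero_of_l1norm_eq_zero h.symm)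
  have hvpos : 0 < l1norm v := by
    have : vmin ≤ l1norm v := by
      obtain ⟨i⟩ := (inferInstance : Nonempty (Fin k))
      calc vmin ≤ v i := hvmin_le i
        _ ≤ |v i| := le_abs_self _
        _ ≤ l1norm v := by
            unfold l1norm
            exact Finset.single_le_sum (f := fun i' => |v i'|)
              (fun i' _ => abs_nonneg _) (Finset.mem_univ i)
    linarith
  -- the comparison constant
  set c := vmin / l1norm v₁ with hcdef
  have hcpos : 0 < c := div_pos hvmin_pos hv₁pos
  have hcv : ∀ i, c * |v₁ i| ≤ v i := by
    intro i
    have h1 : |v₁ i| ≤ l1norm v₁ := by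
      unfold l1norm
      exact Finset.single_le_sum (f := fun i' => |v₁ i'|)
        (fun i' _ => abs_nonneg _) (Finset.mem_univ i)
    calc c * |v₁ i| ≤ c * l1norm v₁ := mul_le_mul_of_nonneg_left h1 hcpos.le
      _ = vmin := div_mul_cancel₀ _ hv₁pos.ne'
      _ ≤ v i := hvmin_le i
  -- upper boundedness of f
  have hlogk : (0:ℝ) ≤ Real.log k := Real.log_nonneg (by exact_mod_cast Nat.one_le_of_lt hk)
  have hUB : ∀ n : ℕ, 1 ≤ n → f n ≤ Real.log k + |Real.log (l1norm v)| := by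
    intro n hn
    have hX := l1norm_nonneg (Matrix.vecMul v (M n))
    rcases hX.eq_or_lt with hX0 | hXpos
    · simp only [hf, ← hX0, Real.log_zero, mul_zero]
      positivity
    · have hle : l1norm (Matrix.vecMul v (M n)) ≤ (k : ℝ)^n * l1norm v :=
        l1_upper θ A h01 n ω v
      have hlog : Real.log (l1norm (Matrix.vecMul v (M n)))
          ≤ n * Real.log k + Real.log (l1norm v) := by
        calc Real.log (l1norm (Matrix.vecMul v (M n)))
            ≤ Real.log ((k : ℝ)^n * l1norm v) := Real.log_le_log hXpos hle
          _ = n * Real.log k + Real.log (l1norm v) := by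
              rw [Real.log_mul (by positivity) hvpos.ne', Real.log_pow]
      have hn' : (0:ℝ) < n := by exact_mod_cast hn
      have hninv : (0:ℝ) < (n:ℝ)⁻¹ := by positivity
      calc f n ≤ (n:ℝ)⁻¹ * (n * Real.log k + Real.log (l1norm v)) :=
            mul_le_mul_of_nonneg_left hlog hninv.le
        _ = Real.log k + (n:ℝ)⁻¹ * Real.log (l1norm v) := by
            field_simp
        _ ≤ Real.log k + |Real.log (l1norm v)| := by
            have : (n:ℝ)⁻¹ * Real.log (l1norm v) ≤ |Real.log (l1norm v)| := by
              calc (n:ℝ)⁻¹ * Real.log (l1norm v) ≤ (n:ℝ)⁻¹ * |Real.log (l1norm v)| :=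
                    mul_le_mul_of_nonneg_left (le_abs_self _) hninv.le
                _ ≤ 1 * |Real.log (l1norm v)| := by
                    apply mul_le_mul_of_nonneg_right _ (abs_nonneg _)
                    rw [inv_le_one_iff₀]; right; exact_mod_cast hn
                _ = |Real.log (l1norm v)| := one_mul _
            linarith
  have hbddAbove : Filter.IsBoundedUnder (· ≤ ·) Filter.atTop f :=
    Filter.isBoundedUnder_of_eventually_le
      ((Filter.eventually_ge_atTop 1).mono fun n hn => hUB n hn)
  -- construct the lower comparison sequence h
  have hmain : ∃ h : ℕ → ℝ, Filter.Tendsto h Filter.atTop (𝓝 lam1) ∧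
      ∀ᶠ n in Filter.atTop, h n ≤ f n := by
    by_cases hall : ∀ n, l1norm (Matrix.vecMul v₁ (M n)) ≠ 0
    · refine ⟨fun n => (n:ℝ)⁻¹ * Real.log c + g n, ?_, ?_⟩
      · have h1 : Filter.Tendsto (fun n : ℕ => (n:ℝ)⁻¹ * Real.log c)
            Filter.atTop (𝓝 0) := by
          simpa using tendsto_inv_atTop_nhds_zero_nat.mul_const (Real.log c)
        simpa using h1.add hg
      · filter_upwards [Filter.eventually_ge_atTop 1] with n hn
        have hYpos : 0 < l1norm (Matrix.vecMul v₁ (M n)) :=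
          lt_of_le_of_ne (l1norm_nonneg _) (Ne.symm (hall n))
        have hcomp : c * l1norm (Matrix.vecMul v₁ (M n))
            ≤ l1norm (Matrix.vecMul v (M n)) :=
          key_compare v₁ v c hcpos.le hcv (M n) (matIter_nonneg θ A h01 n ω)
        have hlog : Real.log c + Real.log (l1norm (Matrix.vecMul v₁ (M n)))
            ≤ Real.log (l1norm (Matrix.vecMul v (M n))) := by
          rw [← Real.log_mul hcpos.ne' hYpos.ne']
          exact Real.log_le_log (by positivity) hcomp
        have hninv : (0:ℝ) ≤ (n:ℝ)⁻¹ := by positivity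
        calc (n:ℝ)⁻¹ * Real.log c + g n
            = (n:ℝ)⁻¹ * (Real.log c + Real.log (l1norm (Matrix.vecMul v₁ (M n)))) := by
              rw [hgdef]; ring
          _ ≤ (n:ℝ)⁻¹ * Real.log (l1norm (Matrix.vecMul v (M n))) :=
              mul_le_mul_of_nonneg_left hlog hninv
          _ = f n := rfl
    · -- case B : lam1 = 0
      push_neg at hall
      obtain ⟨n₀, hn₀⟩ := hall
      have hzero : Matrix.vecMul v₁ (M n₀) = 0 := eq_zero_of_l1norm_eq_zero hn₀
      have hgev : ∀ n, n₀ ≤ n → g n = 0 := by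
        intro n hn
        obtain ⟨m, rfl⟩ := Nat.exists_eq_add_of_le hn
        have : Matrix.vecMul v₁ (M (n₀ + m)) = 0 := by
          rw [hM]
          show Matrix.vecMul v₁ (matIter θ A (n₀ + m) ω) = 0
          rw [matIter_add θ A n₀ m ω, ← Matrix.vecMul_vecMul]
          have : Matrix.vecMul v₁ (matIter θ A n₀ ω) = 0 := hzero
          rw [this, Matrix.zero_vecMul]
        rw [hgdef]
        simp only [this]
        simp [l1norm]
      have hlam0 : lam1 = 0 := by
        have hg0 : Filter.Tendsto g Filter.atTop (𝓝 0) := by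
          apply Filter.Tendsto.congr' _ tendsto_const_nhds
          filter_upwards [Filter.eventually_ge_atTop n₀] with n hn
          exact (hgev n hn).symm
        exact tendsto_nhds_unique hg hg0
      refine ⟨fun n => -|Real.log vmin| * (n:ℝ)⁻¹, ?_, ?_⟩
      · rw [hlam0]
        simpa using tendsto_inv_atTop_nhds_zero_nat.const_mul (-|Real.log vmin|)
      · filter_upwards [Filter.eventually_ge_atTop 1] with n hn
        have hninv : (0:ℝ) ≤ (n:ℝ)⁻¹ := by positivity
        rcases l1_lower v hv vmin hvmin_le (M n) (matIter_nat θ A h01 n ω) with h0 | hge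
        · rw [hf]
          simp only [h0, Real.log_zero, mul_zero]
          nlinarith [abs_nonneg (Real.log vmin)]
        · have hXpos : 0 < l1norm (Matrix.vecMul v (M n)) := lt_of_lt_of_le hvmin_pos hge
          have hlog : -|Real.log vmin| ≤ Real.log (l1norm (Matrix.vecMul v (M n))) :=
            le_trans (neg_abs_le _) (Real.log_le_log hvmin_pos hge)
          calc -|Real.log vmin| * (n:ℝ)⁻¹ = (n:ℝ)⁻¹ * -|Real.log vmin| := by ring
            _ ≤ (n:ℝ)⁻¹ * Real.log (l1norm (Matrix.vecMul v (M n))) :=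
                mul_le_mul_of_nonneg_left hlog hninv
            _ = f n := rfl
  obtain ⟨h, hh, hfh⟩ := hmain
  have hbddBelow : Filter.IsBoundedUnder (· ≥ ·) Filter.atTop f := by
    apply Filter.isBoundedUnder_of_eventually_ge (a := lam1 - 1)
    filter_upwards [hfh, hh.eventually (eventually_gt_nhds (by linarith : lam1 - 1 < lam1))]
      with n h1 h2
    linarith
  have hliminf : lam1 ≤ Filter.liminf f Filter.atTop := by
    have := Filter.liminf_le_liminf hfh hh.isBoundedUnder_ge
      (hbddAbove.isCoboundedUnder_ge)
    rwa [hh.liminf_eq] at this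
  exact tendsto_of_le_liminf_of_limsup_le hliminf (hb v) hbddAbove hbddBelow
end

section
/- Fix ω ∈ Ω and v ∈ ℝ^k. Then for every n ≥ 1 and every index i ∈ {1,…,k}, one has (v·A^{(n)}(ω))_i ≤ (v·B^{(n)}(ω))_i; consequently ‖(v·A^{(n)}(ω))⁺‖₁ ≤ ‖v·B^{(n)}(ω)‖₁, where u⁺ denotes the coordinatewise positive part of a vector u. -/
open MeasureTheory Filter

/-- The matrix `B(θⁿω)`: `B_{ij}(θⁿω) = A_{ij}(θⁿω)` if `(v·A^{(n)}(ω))_i > 0` and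
`(v·A^{(n+1)}(ω))_j > 0`, and `0` otherwise. -/
noncomputable def Bmat {Ω : Type*} {k : ℕ} (θ : Ω → Ω)
    (A : Ω → Matrix (Fin k) (Fin k) ℝ) (v : Fin k → ℝ) (ω : Ω) (n : ℕ) :
    Matrix (Fin k) (Fin k) ℝ :=
  fun i j =>
    if 0 < Matrix.vecMul v (matIter θ A n ω) i ∧
        0 < Matrix.vecMul v (matIter θ A (n + 1) ω) j then
      A (θ^[n] ω) i j
    else 0

/-- `BIter θ A v ω s n = B(θˢω)B(θ^{s+1}ω)⋯B(θ^{s+n-1}ω)`; in particular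
`BIter θ A v ω 0 n = B^{(n)}(ω)`. -/
noncomputable def BIter {Ω : Type*} {k : ℕ} (θ : Ω → Ω)
    (A : Ω → Matrix (Fin k) (Fin k) ℝ) (v : Fin k → ℝ) (ω : Ω) :
    ℕ → ℕ → Matrix (Fin k) (Fin k) ℝ
  | _, 0 => 1
  | s, n + 1 => Bmat θ A v ω s * BIter θ A v ω (s + 1) n

lemma matIter_succ_right {Ω : Type*} {k : ℕ} (θ : Ω → Ω)
    (A : Ω → Matrix (Fin k) (Fin k) ℝ) (n : ℕ) (ω : Ω) :
    matIter θ A (n + 1) ω = matIter θ A n ω * A (θ^[n] ω) := by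
  induction n generalizing ω with
  | zero => simp [matIter]
  | succ n ih =>
      show A ω * matIter θ A (n + 1) (θ ω) = _
      rw [ih (θ ω)]
      simp [matIter, Matrix.mul_assoc, Function.iterate_succ_apply]

section step
variable {Ω : Type*} {k : ℕ} (θ : Ω → Ω) (A : Ω → Matrix (Fin k) (Fin k) ℝ)
  (v : Fin k → ℝ) (ω : Ω)

lemma step_lemma (h01 : ∀ ω i j, A ω i j = 0 ∨ A ω i j = 1) (s : ℕ) (u : Fin k → ℝ)
    (hu : ∀ i, 0 < Matrix.vecMul v (matIter θ A s ω) i →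
      Matrix.vecMul v (matIter θ A s ω) i ≤ u i) :
    (∀ j, 0 ≤ Matrix.vecMul u (Bmat θ A v ω s) j) ∧
    (∀ j, 0 < Matrix.vecMul v (matIter θ A (s + 1) ω) j →
      Matrix.vecMul v (matIter θ A (s + 1) ω) j ≤ Matrix.vecMul u (Bmat θ A v ω s) j) := by
  have hA0 : ∀ ω' i j, (0:ℝ) ≤ A ω' i j := by
    intro ω' i j; rcases h01 ω' i j with h | h <;> rw [h] <;> norm_num
  have hBentry : ∀ j, Matrix.vecMul u (Bmat θ A v ω s) j
      = ∑ i, if 0 < Matrix.vecMul v (matIter θ A s ω) i ∧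
          0 < Matrix.vecMul v (matIter θ A (s + 1) ω) j then u i * A (θ^[s] ω) i j else 0 := by
    intro j
    simp only [Matrix.vecMul, dotProduct, Bmat, mul_ite, mul_zero]
  constructor
  · intro j
    rw [hBentry j]
    refine Finset.sum_nonneg fun i _ => ?_
    split_ifs with h
    · exact mul_nonneg (le_of_lt (lt_of_lt_of_le h.1 (hu i h.1))) (hA0 _ i j)
    · exact le_refl 0
  · intro j hj
    have hexp : Matrix.vecMul v (matIter θ A (s + 1) ω) j
        = ∑ i, Matrix.vecMul v (matIter θ A s ω) i * A (θ^[s] ω) i j := by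
      rw [matIter_succ_right, ← Matrix.vecMul_vecMul]
      simp [Matrix.vecMul, dotProduct]
    rw [hexp, hBentry j]
    refine Finset.sum_le_sum fun i _ => ?_
    by_cases hi : 0 < Matrix.vecMul v (matIter θ A s ω) i
    · rw [if_pos ⟨hi, hj⟩]
      exact mul_le_mul_of_nonneg_right (hu i hi) (hA0 _ i j)
    · rw [if_neg (fun h => hi h.1)]
      exact mul_nonpos_of_nonpos_of_nonneg (not_lt.mp hi) (hA0 _ i j)

end step

section main
variable {Ω : Type*} {k : ℕ} (θ : Ω → Ω) (A : Ω → Matrix (Fin k) (Fin k) ℝ)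
  (v : Fin k → ℝ) (ω : Ω)

lemma main_lemma (h01 : ∀ ω i j, A ω i j = 0 ∨ A ω i j = 1) :
    ∀ n s (u : Fin k → ℝ),
      (∀ i, 0 < Matrix.vecMul v (matIter θ A s ω) i →
        Matrix.vecMul v (matIter θ A s ω) i ≤ u i) →
      (∀ j, 0 ≤ Matrix.vecMul u (BIter θ A v ω s (n + 1)) j) ∧
      (∀ j, 0 < Matrix.vecMul v (matIter θ A (s + n + 1) ω) j →
        Matrix.vecMul v (matIter θ A (s + n + 1) ω) j
          ≤ Matrix.vecMul u (BIter θ A v ω s (n + 1)) j) := by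
  intro n
  induction n with
  | zero =>
      intro s u hu
      have h1 : BIter θ A v ω s 1 = Bmat θ A v ω s := by
        show Bmat θ A v ω s * BIter θ A v ω (s + 1) 0 = _
        show Bmat θ A v ω s * 1 = _
        rw [mul_one]
      rw [h1]
      exact step_lemma θ A v ω h01 s u hu
  | succ n ih =>
      intro s u hu
      have h1 : BIter θ A v ω s (n + 2) = Bmat θ A v ω s * BIter θ A v ω (s + 1) (n + 1) := rfl
      have h2 : ∀ j, Matrix.vecMul u (BIter θ A v ω s (n + 2)) j
          = Matrix.vecMul (Matrix.vecMul u (Bmat θ A v ω s)) (BIter θ A v ω (s + 1) (n + 1)) j := by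
        intro j; rw [h1, ← Matrix.vecMul_vecMul]
      obtain ⟨h0, hdom⟩ := step_lemma θ A v ω h01 s u hu
      obtain ⟨ih0, ihdom⟩ := ih (s + 1) (Matrix.vecMul u (Bmat θ A v ω s)) hdom
      have hidx : s + 1 + n + 1 = s + (n + 1) + 1 := by ring
      rw [hidx] at ihdom
      exact ⟨fun j => (h2 j) ▸ ih0 j, fun j hj => (h2 j) ▸ ihdom j hj⟩

end main

/-- Fix `ω` and `v ∈ ℝ^k`.  Then for every `n ≥ 1` and every `i`,
`(v·A^{(n)}(ω))_i ≤ (v·B^{(n)}(ω))_i`; consequently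
`‖(v·A^{(n)}(ω))⁺‖₁ ≤ ‖v·B^{(n)}(ω)‖₁`. -/
theorem vecMul_A_le_vecMul_B
    {Ω : Type*} [MeasurableSpace Ω]
    (ℙ : Measure Ω) [IsProbabilityMeasure ℙ]
    (θ : Ω → Ω) (hθ : MeasurePreserving θ ℙ ℙ) (hθinv : Function.Bijective θ)
    (k : ℕ) (hk : 2 ≤ k)
    (A : Ω → Matrix (Fin k) (Fin k) ℝ)
    (hAmeas : ∀ i j, Measurable fun ω => A ω i j)
    (h01 : ∀ ω i j, A ω i j = 0 ∨ A ω i j = 1)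
    (ω : Ω) (v : Fin k → ℝ) :
    ∀ n : ℕ, 1 ≤ n →
      (∀ i, Matrix.vecMul v (matIter θ A n ω) i
          ≤ Matrix.vecMul v (BIter θ A v ω 0 n) i) ∧
      (∑ i, max (Matrix.vecMul v (matIter θ A n ω) i) 0
          ≤ ∑ i, |Matrix.vecMul v (BIter θ A v ω 0 n) i|) := by

  intro n hn
  obtain ⟨m, rfl⟩ := Nat.exists_eq_add_of_le hn
  have hu : ∀ i, 0 < Matrix.vecMul v (matIter θ A 0 ω) i →
      Matrix.vecMul v (matIter θ A 0 ω) i ≤ v i := by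
    intro i _
    show Matrix.vecMul v (1 : Matrix (Fin k) (Fin k) ℝ) i ≤ v i
    rw [Matrix.vecMul_one]
  obtain ⟨h0, hdom⟩ := main_lemma θ A v ω h01 m 0 v hu
  simp only [Nat.zero_add, Nat.add_comm 1 m] at h0 hdom ⊢
  have key : ∀ i, Matrix.vecMul v (matIter θ A (m + 1) ω) i
      ≤ Matrix.vecMul v (BIter θ A v ω 0 (m + 1)) i := by
    intro i
    by_cases hi : 0 < Matrix.vecMul v (matIter θ A (m + 1) ω) i
    · exact hdom i hi
    · exact le_trans (not_lt.mp hi) (h0 i)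
  refine ⟨key, Finset.sum_le_sum fun i _ => ?_⟩
  rw [abs_of_nonneg (h0 i)]
  exact max_le (key i) (h0 i)
end

section
/- Let E₀ be a nonzero finite-dimensional subspace of Y and F₀ a subspace with Y = E₀ ⊕ F₀ (direct sum). Let 0 < ε < ψ(E₀)⁻¹. Let E be a subspace of Y with Y = E ⊕ F₀, and let P : Y → Y be the projection onto F₀ along E; assume ‖P y‖_Y ≤ ε ‖y‖_Y for all y ∈ E₀. Then for every nonzero x ∈ E, ‖x‖_Y/‖x‖_* ≤ (1 + ε)/(ψ(E₀)⁻¹ − ε); in particular, if E is finite dimensional and nonzero then ψ(E) ≤ (1 + ε)/(ψ(E₀)⁻¹ − ε). -/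
open Filter

/-- Let `Y` carry two norms `NY = ‖·‖_Y` and `Ns = ‖·‖_*` with
`Ns ≤ NY`.  Let `E₀` be a nonzero finite-dimensional subspace, `F₀` with `Y = E₀ ⊕ F₀`,
and `ψ₀ = ψ(E₀) = sup{NY ξ / Ns ξ : 0 ≠ ξ ∈ E₀}`.  Let `0 < ε < ψ₀⁻¹`, let `E` be a
subspace with `Y = E ⊕ F₀` and let `P` be the projection onto `F₀` along `E` with
`NY (P y) ≤ ε · NY y` for all `y ∈ E₀`.  Then every nonzero `x ∈ E` satisfies
`NY x / Ns x ≤ (1 + ε)/(ψ₀⁻¹ − ε)`; in particular, if `E` is nonzero and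
finite-dimensional then `ψ(E) ≤ (1 + ε)/(ψ₀⁻¹ − ε)`. -/
theorem psi_upper_semicontinuous_bound
    {Y : Type*} [AddCommGroup Y] [Module ℝ Y]
    (NY Ns : Y → ℝ)
    (hNY0 : ∀ x, 0 ≤ NY x) (hNYdef : ∀ x, NY x = 0 → x = 0)
    (hNYadd : ∀ x y, NY (x + y) ≤ NY x + NY y)
    (hNYsmul : ∀ (a : ℝ) (x : Y), NY (a • x) = |a| * NY x)
    (hNs0 : ∀ x, 0 ≤ Ns x) (hNsdef : ∀ x, Ns x = 0 → x = 0)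
    (hNsadd : ∀ x y, Ns (x + y) ≤ Ns x + Ns y)
    (hNssmul : ∀ (a : ℝ) (x : Y), Ns (a • x) = |a| * Ns x)
    (hle : ∀ x, Ns x ≤ NY x)
    (E₀ F₀ E : Submodule ℝ Y)
    (hE₀ne : E₀ ≠ ⊥) [FiniteDimensional ℝ E₀]
    (hcompl₀ : IsCompl E₀ F₀) (hcompl : IsCompl E F₀)
    (ψ₀ : ℝ) (hψ₀ : IsLUB {r : ℝ | ∃ ξ ∈ E₀, ξ ≠ 0 ∧ r = NY ξ / Ns ξ} ψ₀)
    (ε : ℝ) (hε0 : 0 < ε) (hε1 : ε < ψ₀⁻¹)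
    (P : Y →ₗ[ℝ] Y)
    (hPE : ∀ x ∈ E, P x = 0) (hPF : ∀ x ∈ F₀, P x = x)
    (hPbd : ∀ y ∈ E₀, NY (P y) ≤ ε * NY y) :
    (∀ x ∈ E, x ≠ 0 → NY x / Ns x ≤ (1 + ε) / (ψ₀⁻¹ - ε)) ∧
    (E ≠ ⊥ → FiniteDimensional ℝ E →
      ∀ ψE : ℝ, IsLUB {r : ℝ | ∃ ξ ∈ E, ξ ≠ 0 ∧ r = NY ξ / Ns ξ} ψE →
        ψE ≤ (1 + ε) / (ψ₀⁻¹ - ε)) := by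
  have hψ₀pos : 0 < ψ₀ := inv_pos.mp (lt_trans hε0 hε1)
  have hden : 0 < ψ₀⁻¹ - ε := by linarith
  have key : ∀ x ∈ E, x ≠ 0 → NY x / Ns x ≤ (1 + ε) / (ψ₀⁻¹ - ε) := by
    intro x hxE hx0
    have hxtop : x ∈ E₀ ⊔ F₀ := by rw [hcompl₀.sup_eq_top]; trivial
    obtain ⟨e₀, he₀, f₀, hf₀, hsum⟩ := Submodule.mem_sup.mp hxtop
    have hPx : P x = 0 := hPE x hxE
    have hfe : f₀ = - P e₀ := by
      have h1 : P e₀ + P f₀ = 0 := by rw [← map_add, hsum, hPx]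
      rw [hPF f₀ hf₀] at h1
      have := eq_neg_of_add_eq_zero_right h1
      rw [this]
    have he₀0 : e₀ ≠ 0 := by
      intro h
      apply hx0
      have hxF : x ∈ F₀ := by rw [← hsum, h, zero_add]; exact hf₀
      have : x ∈ E ⊓ F₀ := ⟨hxE, hxF⟩
      rw [hcompl.inf_eq_bot] at this
      simpa using this
    have hNYe₀ : 0 < NY e₀ := by
      rcases lt_or_eq_of_le (hNY0 e₀) with h | h
      · exact h
      · exact absurd (hNYdef e₀ h.symm) he₀0
    have hNse₀ : 0 < Ns e₀ := by
      rcases lt_or_eq_of_le (hNs0 e₀) with h | h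
      · exact h
      · exact absurd (hNsdef e₀ h.symm) he₀0
    have hub : NY e₀ / Ns e₀ ≤ ψ₀ := hψ₀.1 ⟨e₀, he₀, he₀0, rfl⟩
    have hNse₀' : ψ₀⁻¹ * NY e₀ ≤ Ns e₀ := by
      rw [div_le_iff₀ hNse₀] at hub
      rw [inv_mul_le_iff₀ hψ₀pos]
      linarith [hub]
    have hPbd' : NY (P e₀) ≤ ε * NY e₀ := hPbd e₀ he₀
    have hNsf₀ : Ns f₀ ≤ ε * NY e₀ := by
      rw [hfe]
      calc Ns (-P e₀) = Ns ((-1 : ℝ) • P e₀) := by rw [neg_one_smul]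
        _ = |(-1 : ℝ)| * Ns (P e₀) := hNssmul _ _
        _ = Ns (P e₀) := by norm_num
        _ ≤ NY (P e₀) := hle _
        _ ≤ ε * NY e₀ := hPbd'
    have hNYf₀ : NY f₀ ≤ ε * NY e₀ := by
      rw [hfe]
      calc NY (-P e₀) = NY ((-1 : ℝ) • P e₀) := by rw [neg_one_smul]
        _ = |(-1 : ℝ)| * NY (P e₀) := hNYsmul _ _
        _ = NY (P e₀) := by norm_num
        _ ≤ ε * NY e₀ := hPbd'
    have hNYx : NY x ≤ (1 + ε) * NY e₀ := by
      calc NY x = NY (e₀ + f₀) := by rw [hsum]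
        _ ≤ NY e₀ + NY f₀ := hNYadd _ _
        _ ≤ NY e₀ + ε * NY e₀ := by linarith
        _ = (1 + ε) * NY e₀ := by ring
    have hNsx : (ψ₀⁻¹ - ε) * NY e₀ ≤ Ns x := by
      have h1 : Ns e₀ ≤ Ns x + Ns f₀ := by
        have : Ns e₀ = Ns (x + (-1 : ℝ) • f₀) := by
          rw [neg_one_smul, ← hsum, add_neg_cancel_right]
        rw [this]
        calc Ns (x + (-1 : ℝ) • f₀) ≤ Ns x + Ns ((-1 : ℝ) • f₀) := hNsadd _ _
          _ = Ns x + |(-1 : ℝ)| * Ns f₀ := by rw [hNssmul]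
          _ = Ns x + Ns f₀ := by norm_num
      linarith
    have hNsxpos : 0 < Ns x := lt_of_lt_of_le (by positivity) hNsx
    rw [div_le_div_iff₀ hNsxpos hden]
    nlinarith [mul_le_mul_of_nonneg_left hNsx (le_of_lt (by linarith : (0:ℝ) < 1 + ε))]
  refine ⟨key, fun _ _ ψE hψE => ?_⟩
  apply hψE.2
  rintro r ⟨ξ, hξE, hξ0, rfl⟩
  exact key ξ hξE hξ0
end
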